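/- arXiv:1612.09385 — 2 statements merged into one kernel-verified Lean document; each statement's English description precedes it below -/
import Mathlib

section
/- For real numbers α > 0 and 0 ≤ β < 1, the series ∑_{k=0}^∞ (α + βk)^{k-1}/k! · e^{-(α+βk)} converges and equals 1/α. -/
open Finset Polynomial Filter Real Topology

lemma findiff : ∀ (n : ℕ), 1 ≤ n → ∀ j, j < n →
    ∑ k ∈ Finset.range (n+1), (-1:ℝ)^k * (n.choose k) * (k:ℝ)^j = 0 := by
  intro n
  induction n with
  | zero => omega
  | succ m ih =>
    intro _ j hj
    rcases Nat.eq_zero_or_pos m with rfl | hm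
    · interval_cases j
      simp [Finset.sum_range_succ]
    rw [Finset.sum_range_succ']
    have hsplit : ∀ i, (-1:ℝ)^(i+1) * ((m+1).choose (i+1)) * ((i+1:ℕ):ℝ)^j
        = (-1:ℝ)^(i+1) * (m.choose (i+1)) * ((i+1:ℕ):ℝ)^j
          + (-1:ℝ)^(i+1) * (m.choose i) * ((i+1:ℕ):ℝ)^j := by
      intro i
      rw [Nat.choose_succ_succ']
      push_cast
      ring
    rw [Finset.sum_congr rfl (fun i _ => hsplit i), Finset.sum_add_distrib]
    have h1 : ∑ i ∈ Finset.range (m+1), (-1:ℝ)^(i+1) * (m.choose (i+1)) * ((i+1:ℕ):ℝ)^j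
        = ∑ k ∈ Finset.range (m+1), (-1:ℝ)^k * (m.choose k) * (k:ℝ)^j
          - (-1:ℝ)^0 * (m.choose 0) * ((0:ℕ):ℝ)^j := by
      rw [eq_sub_iff_add_eq,
        Finset.sum_range_succ' (fun k => (-1:ℝ)^k * (m.choose k) * ((k:ℕ):ℝ)^j) m,
        Finset.sum_range_succ]
      simp [Nat.choose_succ_self]
    rw [h1]
    have h2 : ∀ i : ℕ, ((i+1:ℕ):ℝ)^j = ∑ t ∈ Finset.range (j+1), (j.choose t : ℝ) * (i:ℝ)^t := by
      intro i
      push_cast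
      rw [add_pow]
      exact Finset.sum_congr rfl (fun t _ => by ring)
    have h3 : ∑ i ∈ Finset.range (m+1), (-1:ℝ)^(i+1) * (m.choose i) * ((i+1:ℕ):ℝ)^j
        = - ∑ t ∈ Finset.range (j+1), (j.choose t : ℝ) *
            (∑ i ∈ Finset.range (m+1), (-1:ℝ)^i * (m.choose i) * (i:ℝ)^t) := by
      have : ∀ i ∈ Finset.range (m+1), (-1:ℝ)^(i+1) * (m.choose i) * ((i+1:ℕ):ℝ)^j
          = ∑ t ∈ Finset.range (j+1),
              (-((j.choose t : ℝ) * ((-1:ℝ)^i * (m.choose i) * (i:ℝ)^t))) := by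
        intro i _
        rw [h2, Finset.mul_sum]
        exact Finset.sum_congr rfl (fun t _ => by ring)
      rw [Finset.sum_congr rfl this, Finset.sum_comm, ← Finset.sum_neg_distrib]
      refine Finset.sum_congr rfl (fun t _ => ?_)
      rw [Finset.mul_sum, ← Finset.sum_neg_distrib]
    rw [h3]
    -- split off t = j term
    have hDmj : ∀ t, t < j → ∑ i ∈ Finset.range (m+1), (-1:ℝ)^i * (m.choose i) * (i:ℝ)^t = 0 :=
      fun t ht => ih hm t (by omega)
    have h4 : ∑ t ∈ Finset.range (j+1), (j.choose t : ℝ) *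
        (∑ i ∈ Finset.range (m+1), (-1:ℝ)^i * (m.choose i) * (i:ℝ)^t)
        = ∑ i ∈ Finset.range (m+1), (-1:ℝ)^i * (m.choose i) * (i:ℝ)^j := by
      rw [Finset.sum_range_succ]
      have hz : ∀ t ∈ Finset.range j, (j.choose t : ℝ) *
          (∑ i ∈ Finset.range (m+1), (-1:ℝ)^i * (m.choose i) * (i:ℝ)^t) = 0 := by
        intro t ht
        rw [hDmj t (Finset.mem_range.mp ht), mul_zero]
      rw [Finset.sum_congr rfl hz]
      simp
    rw [h4]
    simp only [Nat.choose_zero_right, Nat.cast_one]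
    ring

lemma findiff_pow (n : ℕ) (hn : 1 ≤ n) (x z : ℝ) :
    ∑ k ∈ Finset.range (n+1), (-1:ℝ)^k * (n.choose k) * (x + k*z)^(n-1) = 0 := by
  have expand : ∀ k ∈ Finset.range (n+1), (-1:ℝ)^k * (n.choose k) * (x + (k:ℝ)*z)^(n-1)
      = ∑ j ∈ Finset.range n,
          (x^j * z^(n-1-j) * ((n-1).choose j : ℝ)) * ((-1:ℝ)^k * (n.choose k) * (k:ℝ)^(n-1-j)) := by
    intro k _
    rw [add_pow]
    have h1 : n - 1 + 1 = n := by omega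
    rw [h1, Finset.mul_sum]
    exact Finset.sum_congr rfl (fun j _ => by rw [mul_pow]; ring)
  rw [Finset.sum_congr rfl expand, Finset.sum_comm]
  refine Finset.sum_eq_zero (fun j hj => ?_)
  rw [← Finset.mul_sum, findiff n hn (n-1-j) (by omega), mul_zero]

noncomputable def Pabel (x z : ℝ) (n : ℕ) : Polynomial ℝ :=
  X^n + ∑ k ∈ Finset.Icc 1 n,
    Polynomial.C ((n.choose k : ℝ) * x * (x + k*z)^(k-1)) * (X - Polynomial.C ((k:ℝ)*z))^(n-k)

lemma choose_aux (n k : ℕ) (hk : 1 ≤ k) (hk' : k ≤ n) :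
    (n+1).choose k * (n+1-k) = (n+1) * n.choose k := by
  have h1 : (n+1).choose k = (n+1).choose (n+1-k) := (Nat.choose_symm (by omega)).symm
  have h2 : n + 1 - k = (n - k) + 1 := by omega
  have h4 := Nat.add_one_mul_choose_eq n (n-k)
  have h3 : n.choose (n - k) = n.choose k := Nat.choose_symm hk'
  rw [h1, h2, ← h3, ← h4]

lemma choose_aux_real (n k : ℕ) (hk : 1 ≤ k) (hk' : k ≤ n) :
    ((n+1).choose k : ℝ) * (((n+1)-k : ℕ) : ℝ) = ((n:ℝ)+1) * (n.choose k : ℝ) := by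
  exact_mod_cast congrArg (Nat.cast : ℕ → ℝ) (choose_aux n k hk hk')

lemma Pabel_deriv (x z : ℝ) (n : ℕ) :
    derivative (Pabel x z (n+1)) = Polynomial.C ((n:ℝ)+1) * Pabel x z n := by
  unfold Pabel
  rw [derivative_add, derivative_X_pow, derivative_sum,
    Finset.sum_Icc_succ_top (by omega : 1 ≤ n+1)]
  have hlast : derivative (Polynomial.C (((n+1).choose (n+1) : ℝ) * x * (x + ((n+1:ℕ):ℝ)*z)^((n+1)-1))
      * (X - Polynomial.C (((n+1:ℕ):ℝ)*z))^((n+1)-(n+1))) = 0 := by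
    simp only [Nat.sub_self, pow_zero, mul_one, derivative_C]
  rw [hlast, add_zero, mul_add, Finset.mul_sum]
  have hX : Polynomial.C (((n+1:ℕ):ℝ)) * (X:Polynomial ℝ)^((n+1)-1)
      = Polynomial.C ((n:ℝ)+1) * X^n := by
    push_cast
    rfl
  rw [hX]
  congr 1
  refine Finset.sum_congr rfl (fun k hk => ?_)
  obtain ⟨hk1, hk2⟩ := Finset.mem_Icc.mp hk
  rw [derivative_mul, derivative_C, zero_mul, zero_add, derivative_X_sub_C_pow]
  have he : n + 1 - k - 1 = n - k := by omega
  have hco : ((n+1).choose k : ℝ) * x * (x + (k:ℝ)*z)^(k-1) * (((n+1)-k : ℕ):ℝ)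
      = ((n:ℝ)+1) * ((n.choose k : ℝ) * x * (x + (k:ℝ)*z)^(k-1)) := by
    linear_combination (x * (x + (k:ℝ)*z)^(k-1)) * choose_aux_real n k hk1 hk2
  rw [he, ← mul_assoc, ← Polynomial.C_mul, ← mul_assoc, ← Polynomial.C_mul, hco]



lemma Pabel_eval (x z : ℝ) (n : ℕ) (hn : 1 ≤ n) : (Pabel x z n).eval (-x) = 0 := by
  unfold Pabel
  rw [eval_add, eval_pow, eval_X, eval_finset_sum]
  have hterm : ∀ k ∈ Finset.Icc 1 n,
      eval (-x) (Polynomial.C ((n.choose k : ℝ) * x * (x + k*z)^(k-1))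
        * (X - Polynomial.C ((k:ℝ)*z))^(n-k))
      = x * (-1:ℝ)^n * ((-1:ℝ)^k * (n.choose k) * (x + k*z)^(n-1)) := by
    intro k hk
    obtain ⟨hk1, hk2⟩ := Finset.mem_Icc.mp hk
    rw [eval_mul, eval_C, eval_pow, eval_sub, eval_X, eval_C]
    have h1 : (-x - (k:ℝ)*z) = (-1) * (x + k*z) := by ring
    rw [h1, mul_pow]
    have h2 : (x + (k:ℝ)*z)^(k-1) * (x + (k:ℝ)*z)^(n-k) = (x + (k:ℝ)*z)^(n-1) := by
      rw [← pow_add]; congr 1; omega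
    have h3 : (-1:ℝ)^(n-k) = (-1:ℝ)^n * (-1:ℝ)^k := by
      have e1 : (-1:ℝ)^(n-k) * (-1:ℝ)^(2*k) = (-1:ℝ)^(n+k) := by
        rw [← pow_add]; congr 1; omega
      have e2 : (-1:ℝ)^(2*k) = 1 := by rw [pow_mul]; norm_num
      rw [e2, mul_one] at e1
      rw [e1, pow_add]
    rw [h3]
    linear_combination ((n.choose k : ℝ) * x * (-1:ℝ)^n * (-1:ℝ)^k) * h2
  rw [Finset.sum_congr rfl hterm, ← Finset.mul_sum]
  have hins : Finset.range (n+1) = insert 0 (Finset.Icc 1 n) := by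
    ext a; simp; omega
  have hsum : ∑ k ∈ Finset.Icc 1 n, ((-1:ℝ)^k * (n.choose k) * (x + k*z)^(n-1))
      = - x^(n-1) := by
    have h0 : (0:ℝ) = ∑ k ∈ Finset.range (n+1), (-1:ℝ)^k * (n.choose k) * (x + k*z)^(n-1) :=
      (findiff_pow n hn x z).symm
    rw [hins, Finset.sum_insert (by simp)] at h0
    simp at h0
    linarith [h0]
  rw [hsum]
  have hxx : x * x^(n-1) = x^n := by
    rw [← pow_succ']; congr 1; omega
  rw [neg_pow]
  linear_combination (-(-1:ℝ)^n) * hxx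

lemma Pabel_eq (x z : ℝ) (n : ℕ) : Pabel x z n = (X + Polynomial.C x)^n := by
  induction n with
  | zero => unfold Pabel; simp
  | succ m ih =>
    have hd : derivative (Pabel x z (m+1) - (X + Polynomial.C x)^(m+1)) = 0 := by
      rw [derivative_sub, Pabel_deriv, ih, derivative_pow, derivative_add, derivative_X,
        derivative_C, add_zero, mul_one, Nat.add_sub_cancel, Nat.cast_add, Nat.cast_one]
      ring
    have hC := Polynomial.eq_C_of_derivative_eq_zero hd
    have he := congrArg (eval (-x)) hC
    rw [eval_sub, Pabel_eval x z (m+1) (by omega), eval_pow, eval_add, eval_X, eval_C,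
      eval_C, neg_add_cancel, zero_pow (by omega : m+1 ≠ 0), zero_sub, neg_zero] at he
    rw [← he, map_zero, sub_eq_zero] at hC
    exact hC



lemma abel_eval (x z y : ℝ) (n : ℕ) :
    y^n + ∑ k ∈ Finset.Icc 1 n,
      (n.choose k : ℝ) * x * (x + k*z)^(k-1) * (y - k*z)^(n-k) = (x+y)^n := by
  have h := congrArg (eval y) (Pabel_eq x z n)
  rw [Polynomial.eval_pow, eval_add, eval_X, eval_C] at h
  unfold Pabel at h
  rw [eval_add, eval_pow, eval_X, eval_finset_sum] at h
  rw [add_comm y x] at h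
  rw [← h]
  congr 1
  refine Finset.sum_congr rfl (fun k hk => ?_)
  rw [eval_mul, eval_C, eval_pow, eval_sub, eval_X, eval_C]

noncomputable def Wfun (α z : ℝ) (n k : ℕ) : ℝ :=
  if k = 0 then (n:ℝ)^n else (n.choose k : ℝ) * α * (α + k*z)^(k-1) * ((n:ℝ) - k*z)^(n-k)

lemma W_sum (α z : ℝ) (n : ℕ) :
    ∑ k ∈ Finset.range (n+1), Wfun α z n k = (α + (n:ℝ))^n := by
  have hins : Finset.range (n+1) = insert 0 (Finset.Icc 1 n) := by ext a; simp; omega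
  rw [hins, Finset.sum_insert (by simp)]
  have h0 : Wfun α z n 0 = (n:ℝ)^n := by unfold Wfun; simp
  have h1 : ∀ k ∈ Finset.Icc 1 n, Wfun α z n k
      = (n.choose k : ℝ) * α * (α + k*z)^(k-1) * ((n:ℝ) - k*z)^(n-k) := by
    intro k hk
    obtain ⟨hk1, _⟩ := Finset.mem_Icc.mp hk
    unfold Wfun
    rw [if_neg (by omega)]
  rw [h0, Finset.sum_congr rfl h1]
  exact abel_eval α z (n:ℝ) n

lemma W_nonneg (α z : ℝ) (hα : 0 < α) (hz0 : 0 ≤ z) (hz1 : z ≤ 1) (n k : ℕ) (hk : k ≤ n) :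
    0 ≤ Wfun α z n k := by
  unfold Wfun
  split_ifs with h
  · positivity
  have hnk : (0:ℝ) ≤ (n:ℝ) - k*z := by
    have h1 : (k:ℝ)*z ≤ (k:ℝ) := by nlinarith [(Nat.cast_pos (α := ℝ)).mpr (Nat.pos_of_ne_zero h)]
    have h2 : (k:ℝ) ≤ (n:ℝ) := Nat.cast_le.mpr hk
    linarith
  have hkz : (0:ℝ) ≤ α + k*z := by positivity
  positivity

noncomputable def Ffun (α z : ℝ) (n k : ℕ) : ℝ :=
  if k ≤ n then Wfun α z n k / ((n:ℝ)+α)^n else 0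

lemma F_hasSum (α z : ℝ) (hα : 0 < α) (n : ℕ) : HasSum (Ffun α z n) 1 := by
  have hvanish : ∀ k ∉ Finset.range (n+1), Ffun α z n k = 0 := by
    intro k hk
    unfold Ffun
    rw [if_neg (by simp at hk; omega)]
  have h : HasSum (Ffun α z n) _ := hasSum_sum_of_ne_finset_zero hvanish
  have hsum : ∑ k ∈ Finset.range (n+1), Ffun α z n k = 1 := by
    have : ∀ k ∈ Finset.range (n+1), Ffun α z n k = Wfun α z n k / ((n:ℝ)+α)^n := by
      intro k hk
      unfold Ffun
      rw [if_pos (by simp at hk; omega)]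
    rw [Finset.sum_congr rfl this, ← Finset.sum_div, W_sum, add_comm α (n:ℝ),
      div_self (by positivity)]
  rwa [hsum] at h

lemma F_nonneg (α z : ℝ) (hα : 0 < α) (hz0 : 0 ≤ z) (hz1 : z ≤ 1) (n k : ℕ) :
    0 ≤ Ffun α z n k := by
  unfold Ffun
  split_ifs with h
  · have := W_nonneg α z hα hz0 hz1 n k h
    positivity
  · exact le_refl 0

section
variable (α β β' : ℝ)

lemma claim_a (hα : 0 < α) (hβ0 : 0 < β) (hb : β < β') (k : ℕ) (hk : 1 ≤ k) :
    (α + k*β)^(k-1) ≤ Real.exp (α*(β'-β)/(β*β')) * (β/β')^(k-1) * (α + k*β')^(k-1) := by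
  have hβ' : 0 < β' := lt_trans hβ0 hb
  have hK : (1:ℝ) ≤ (k:ℝ) := by exact_mod_cast hk
  have hKpos : (0:ℝ) < k := by linarith
  set c := α*(β'-β)/(β*β') with hc
  have hcpos : 0 ≤ c := by
    apply div_nonneg
    · nlinarith
    · positivity
  have hexp : 1 + c/(k:ℝ) ≤ Real.exp (c/(k:ℝ)) := by
    have := Real.add_one_le_exp (c/(k:ℝ))
    linarith
  have hbase : α + k*β ≤ (β/β') * (α + k*β') * Real.exp (c/(k:ℝ)) := by
    have h1 : (β/β') * (α + k*β') * (1 + c/(k:ℝ)) = α*β/β' + k*β + (α*β/β' + k*β)*(c/k) := by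
      field_simp
    have h2 : α + k*β ≤ (β/β') * (α + k*β') * (1 + c/(k:ℝ)) := by
      rw [h1]
      have h3 : (α*β/β' + k*β)*(c/k) ≥ β * c := by
        have : α*β/β' ≥ 0 := by positivity
        have hck : c/k ≥ 0 := by positivity
        have : (α*β/β' + k*β) ≥ k*β := by linarith
        calc (α*β/β' + k*β)*(c/k) ≥ (k*β)*(c/k) := by nlinarith
          _ = β * c := by field_simp
      have h4 : β * c = α*(β'-β)/β' := by
        rw [hc]
        field_simp
      have h5 : α*β/β' + α*(β'-β)/β' = α := by field_simp; ring
      nlinarith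
    calc α + k*β ≤ (β/β') * (α + k*β') * (1 + c/(k:ℝ)) := h2
      _ ≤ (β/β') * (α + k*β') * Real.exp (c/(k:ℝ)) := by
          have hpos : 0 ≤ (β/β') * (α + k*β') := by positivity
          nlinarith [Real.exp_pos (c/(k:ℝ))]
  have hpow := pow_le_pow_left₀ (by positivity) hbase (k-1)
  calc (α + k*β)^(k-1) ≤ ((β/β') * (α + k*β') * Real.exp (c/(k:ℝ)))^(k-1) := hpow
    _ = (β/β')^(k-1) * (α + k*β')^(k-1) * (Real.exp (c/(k:ℝ)))^(k-1) := by
        rw [mul_pow, mul_pow]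
    _ ≤ (β/β')^(k-1) * (α + k*β')^(k-1) * Real.exp c := by
        have he : (Real.exp (c/(k:ℝ)))^(k-1) = Real.exp (((k-1:ℕ):ℝ) * (c/(k:ℝ))) := by
          rw [Real.exp_nat_mul]
        rw [he]
        have harg : ((k-1:ℕ):ℝ) * (c/(k:ℝ)) ≤ c := by
          have h6 : ((k-1:ℕ):ℝ) ≤ (k:ℝ) := by exact_mod_cast Nat.sub_le k 1
          have h7 : 0 ≤ c/(k:ℝ) := by positivity
          calc ((k-1:ℕ):ℝ) * (c/(k:ℝ)) ≤ (k:ℝ) * (c/(k:ℝ)) := by nlinarith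
            _ = c := by field_simp
        have := Real.exp_le_exp.mpr harg
        have hpb : 0 ≤ (β/β')^(k-1) * (α + k*β')^(k-1) := by positivity
        nlinarith
    _ = Real.exp c * (β/β')^(k-1) * (α + k*β')^(k-1) := by ring

lemma claim_b (hβ0 : 0 < β) (hb : β < β') (hb1 : β' ≤ 1) (n k : ℕ) (hk : 1 ≤ k) (hkn : k ≤ n) :
    ((n:ℝ) - k*β)^(n-k) ≤ Real.exp ((k:ℝ)*(β'-β)) * ((n:ℝ) - k*β')^(n-k) := by
  have hβ' : 0 < β' := lt_trans hβ0 hb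
  rcases Nat.eq_or_lt_of_le hkn with rfl | hlt
  · simp only [Nat.sub_self, pow_zero, mul_one]
    have h0 : (0:ℝ) ≤ (k:ℝ)*(β'-β) := by
      have : (0:ℝ) ≤ (k:ℝ) := by positivity
      nlinarith
    exact Real.one_le_exp h0
  · have hNK : ((n:ℝ) - (k:ℝ)) > 0 := by
      have : (k:ℝ) < (n:ℝ) := by exact_mod_cast hlt
      linarith
    have hNb' : (n:ℝ) - k*β' > 0 := by
      have : (0:ℝ) ≤ (k:ℝ) := by positivity
      nlinarith
    set x := (k:ℝ)*(β'-β)/((n:ℝ) - k*β') with hx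
    have hxpos : 0 ≤ x := by
      apply div_nonneg
      · have : (0:ℝ) ≤ (k:ℝ) := by positivity
        nlinarith
      · linarith
    have hbase : (n:ℝ) - k*β ≤ ((n:ℝ) - k*β') * Real.exp x := by
      have h1 : ((n:ℝ) - k*β') * (1 + x) = (n:ℝ) - k*β := by
        rw [hx]; field_simp; ring
      have h2 : 1 + x ≤ Real.exp x := by have := Real.add_one_le_exp x; linarith
      nlinarith
    have hWpos : (0:ℝ) ≤ (n:ℝ) - k*β := by
      have h1 : (k:ℝ)*β ≤ (k:ℝ) := by
        have : (0:ℝ) ≤ (k:ℝ) := by positivity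
        nlinarith
      have h2 : (k:ℝ) ≤ (n:ℝ) := Nat.cast_le.mpr hkn
      linarith
    have hpow := pow_le_pow_left₀ hWpos hbase (n-k)
    calc ((n:ℝ) - k*β)^(n-k) ≤ (((n:ℝ) - k*β') * Real.exp x)^(n-k) := hpow
      _ = ((n:ℝ) - k*β')^(n-k) * (Real.exp x)^(n-k) := mul_pow _ _ _
      _ ≤ ((n:ℝ) - k*β')^(n-k) * Real.exp ((k:ℝ)*(β'-β)) := by
          have he : (Real.exp x)^(n-k) = Real.exp (((n-k:ℕ):ℝ) * x) := by
            rw [Real.exp_nat_mul]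
          rw [he]
          have hmx : ((n-k:ℕ):ℝ) * x ≤ (k:ℝ)*(β'-β) := by
            have hc1 : ((n-k:ℕ):ℝ) = (n:ℝ) - (k:ℝ) := by
              rw [Nat.cast_sub hkn]
            have hc2 : (n:ℝ) - (k:ℝ) ≤ (n:ℝ) - k*β' := by
              have : (0:ℝ) ≤ (k:ℝ) := by positivity
              nlinarith
            rw [hc1, hx]
            rw [div_eq_mul_inv, ← mul_assoc]
            rw [mul_comm ((n:ℝ) - (k:ℝ)) _, mul_assoc]
            have h8 : ((n:ℝ) - (k:ℝ)) * ((n:ℝ) - k*β')⁻¹ ≤ 1 := by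
              rw [← div_eq_mul_inv]
              exact div_le_one_of_le₀ hc2 (le_of_lt hNb')
            nlinarith [mul_nonneg (by positivity : (0:ℝ) ≤ (k:ℝ)) (by linarith : (0:ℝ) ≤ β'-β),
              mul_nonneg (by linarith : (0:ℝ) ≤ (n:ℝ)-(k:ℝ)) (inv_nonneg.mpr (le_of_lt hNb'))]
          have := Real.exp_le_exp.mpr hmx
          have hpb : 0 ≤ ((n:ℝ) - k*β')^(n-k) := by positivity
          nlinarith
      _ = Real.exp ((k:ℝ)*(β'-β)) * ((n:ℝ) - k*β')^(n-k) := by ring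
end

lemma F_le_one (α z : ℝ) (hα : 0 < α) (hz0 : 0 ≤ z) (hz1 : z ≤ 1) (n k : ℕ) :
    Ffun α z n k ≤ 1 := by
  unfold Ffun
  split_ifs with h
  · rw [div_le_one (by positivity)]
    have hle : Wfun α z n k ≤ ∑ j ∈ Finset.range (n+1), Wfun α z n j := by
      refine Finset.single_le_sum (fun j hj => W_nonneg α z hα hz0 hz1 n j ?_) ?_
      · simp at hj; omega
      · simp; omega
    rw [W_sum] at hle
    calc Wfun α z n k ≤ (α + (n:ℝ))^n := hle
      _ = ((n:ℝ) + α)^n := by rw [add_comm]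
  · norm_num

lemma F_bound (α β β' : ℝ) (hα : 0 < α) (hβ0 : 0 < β) (hb : β < β') (hb1 : β' ≤ 1)
    (n k : ℕ) :
    Ffun α β n k ≤ (max 1 (Real.exp (α*(β'-β)/(β*β')) * (β'/β)))
      * ((β/β') * Real.exp (β'-β))^k := by
  have hβ' : 0 < β' := lt_trans hβ0 hb
  have hβ1 : β < 1 := lt_of_lt_of_le hb hb1
  set K1 := Real.exp (α*(β'-β)/(β*β')) with hK1
  set ρ := (β/β') * Real.exp (β'-β) with hρ
  have hρpos : 0 < ρ := by positivity
  have hC0 : (1:ℝ) ≤ max 1 (K1 * (β'/β)) := le_max_left _ _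
  rcases Nat.eq_zero_or_pos k with rfl | hk1
  · rw [pow_zero, mul_one]
    calc Ffun α β n 0 ≤ 1 := F_le_one α β hα (le_of_lt hβ0) (le_of_lt hβ1) n 0
      _ ≤ _ := hC0
  by_cases hkn : k ≤ n
  · have hFβ : Ffun α β n k = Wfun α β n k / ((n:ℝ)+α)^n := by
      unfold Ffun; rw [if_pos hkn]
    have hFβ' : Ffun α β' n k = Wfun α β' n k / ((n:ℝ)+α)^n := by
      unfold Ffun; rw [if_pos hkn]
    have hWβ : Wfun α β n k
        = (n.choose k : ℝ) * α * (α + k*β)^(k-1) * ((n:ℝ) - k*β)^(n-k) := by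
      unfold Wfun; rw [if_neg (by omega)]
    have hWβ' : Wfun α β' n k
        = (n.choose k : ℝ) * α * (α + k*β')^(k-1) * ((n:ℝ) - k*β')^(n-k) := by
      unfold Wfun; rw [if_neg (by omega)]
    have ha := claim_a α β β' hα hβ0 hb k hk1
    have hbb := claim_b β β' hβ0 hb hb1 n k hk1 hkn
    have hWcomp : Wfun α β n k
        ≤ K1 * (β/β')^(k-1) * Real.exp ((k:ℝ)*(β'-β)) * Wfun α β' n k := by
      rw [hWβ, hWβ']
      have h1 : (0:ℝ) ≤ (n.choose k : ℝ) * α := by positivity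
      have h2 : (0:ℝ) ≤ (α + k*β)^(k-1) := by positivity
      have h3 : (0:ℝ) ≤ ((n:ℝ) - k*β)^(n-k) := by
        apply pow_nonneg
        have hkk : (k:ℝ)*β ≤ (k:ℝ) := by
          have : (0:ℝ) ≤ (k:ℝ) := by positivity
          nlinarith
        have : (k:ℝ) ≤ (n:ℝ) := Nat.cast_le.mpr hkn
        linarith
      have h4 : (0:ℝ) ≤ K1 * (β/β')^(k-1) * (α + k*β')^(k-1) := by positivity
      calc (n.choose k : ℝ) * α * (α + k*β)^(k-1) * ((n:ℝ) - k*β)^(n-k)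
          ≤ (n.choose k : ℝ) * α * (K1 * (β/β')^(k-1) * (α + k*β')^(k-1))
            * ((n:ℝ) - k*β)^(n-k) := by nlinarith [mul_le_mul_of_nonneg_left ha h1]
        _ ≤ (n.choose k : ℝ) * α * (K1 * (β/β')^(k-1) * (α + k*β')^(k-1))
            * (Real.exp ((k:ℝ)*(β'-β)) * ((n:ℝ) - k*β')^(n-k)) := by
              have h5 : (0:ℝ) ≤ (n.choose k : ℝ) * α * (K1 * (β/β')^(k-1) * (α + k*β')^(k-1)) := by
                positivity
              exact mul_le_mul_of_nonneg_left hbb h5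
        _ = K1 * (β/β')^(k-1) * Real.exp ((k:ℝ)*(β'-β))
            * ((n.choose k : ℝ) * α * (α + k*β')^(k-1) * ((n:ℝ) - k*β')^(n-k)) := by ring
    have hF'le : Ffun α β' n k ≤ 1 := F_le_one α β' hα (le_of_lt hβ') hb1 n k
    have hF'nonneg : 0 ≤ Ffun α β' n k := F_nonneg α β' hα (le_of_lt hβ') hb1 n k
    have hdenpos : (0:ℝ) < ((n:ℝ)+α)^n := by positivity
    have hchain : Ffun α β n k ≤ K1 * (β/β')^(k-1) * Real.exp ((k:ℝ)*(β'-β)) := by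
      rw [hFβ]
      calc Wfun α β n k / ((n:ℝ)+α)^n
            ≤ (K1 * (β/β')^(k-1) * Real.exp ((k:ℝ)*(β'-β)) * Wfun α β' n k) / ((n:ℝ)+α)^n := by
              exact div_le_div_of_nonneg_right hWcomp hdenpos.le
          _ = K1 * (β/β')^(k-1) * Real.exp ((k:ℝ)*(β'-β)) * Ffun α β' n k := by
              rw [hFβ']; ring
          _ ≤ K1 * (β/β')^(k-1) * Real.exp ((k:ℝ)*(β'-β)) * 1 := by
              have : (0:ℝ) ≤ K1 * (β/β')^(k-1) * Real.exp ((k:ℝ)*(β'-β)) := by positivity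
              exact mul_le_mul_of_nonneg_left hF'le this
          _ = K1 * (β/β')^(k-1) * Real.exp ((k:ℝ)*(β'-β)) := by rw [mul_one]
    have hfinal : K1 * (β/β')^(k-1) * Real.exp ((k:ℝ)*(β'-β)) = K1 * (β'/β) * ρ^k := by
      have hkk : k - 1 + 1 = k := by omega
      have hmulpow : ρ^k = (β/β')^k * (Real.exp (β'-β))^k := by rw [hρ, mul_pow]
      have hexpk : (Real.exp (β'-β))^k = Real.exp ((k:ℝ)*(β'-β)) := by
        rw [← Real.exp_nat_mul]
      have hpowk : (β/β')^k = (β/β')^(k-1) * (β/β') := by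
        rw [← pow_succ, hkk]
      rw [hmulpow, hexpk, hpowk]
      field_simp
    rw [hfinal] at hchain
    calc Ffun α β n k ≤ K1 * (β'/β) * ρ^k := hchain
      _ ≤ max 1 (K1 * (β'/β)) * ρ^k := by
          have := le_max_right (1:ℝ) (K1 * (β'/β))
          nlinarith [pow_pos hρpos k]
  · unfold Ffun
    rw [if_neg hkn]
    positivity

lemma rho_lt_one (β : ℝ) (hβ0 : 0 < β) (hβ1 : β < 1) :
    (β/((1+β)/2)) * Real.exp ((1+β)/2 - β) < 1 := by
  set u := (1-β)/2 with hu
  have hupos : 0 < u := by rw [hu]; linarith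
  have hβ' : 0 < (1+β)/2 := by linarith
  have harg : (1+β)/2 - β = u := by rw [hu]; ring
  rw [harg]
  have h1 : 1 - u < Real.exp (-u) := by
    have := Real.add_one_lt_exp (show -u ≠ 0 by linarith)
    linarith
  have h2 : β/((1+β)/2) ≤ 1 - u := by
    rw [div_le_iff₀ hβ']
    rw [hu]
    nlinarith
  have hprod : Real.exp (-u) * Real.exp u = 1 := by
    rw [← Real.exp_add]; norm_num
  have hepos := Real.exp_pos u
  have henpos := Real.exp_pos (-u)
  nlinarith

lemma sub_div_tendsto (c : ℝ) (k : ℕ) :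
    Tendsto (fun n : ℕ => (((n - k : ℕ):ℝ))/((n:ℝ)+c)) atTop (𝓝 1) := by
  have h2 : Tendsto (fun n : ℕ => ((n:ℝ) + c)) atTop atTop :=
    tendsto_atTop_add_const_right _ c tendsto_natCast_atTop_atTop
  have hB0 : Tendsto (fun n : ℕ => (((k:ℝ)+c))/((n:ℝ)+c)) atTop (𝓝 0) :=
    tendsto_const_nhds.div_atTop h2
  have h1 : Tendsto (fun n : ℕ => 1 - (((k:ℝ)+c))/((n:ℝ)+c)) atTop (𝓝 (1 - 0)) :=
    tendsto_const_nhds.sub hB0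
  rw [sub_zero] at h1
  apply h1.congr'
  filter_upwards [eventually_ge_atTop k, h2.eventually_gt_atTop 0] with n hn hpos
  rw [Nat.cast_sub hn]
  field_simp
  ring

lemma ratio_pow_tendsto (a c : ℝ) (k : ℕ) :
    Tendsto (fun n : ℕ => (((n:ℝ) + a)/((n:ℝ) + c))^(n - k)) atTop (𝓝 (Real.exp (a - c))) := by
  have h2 : Tendsto (fun n : ℕ => ((n:ℝ) + c)) atTop atTop :=
    tendsto_atTop_add_const_right _ c tendsto_natCast_atTop_atTop
  have hA : Tendsto (fun n : ℕ => ((n:ℝ)+c) * Real.log (1 + (a-c)/((n:ℝ)+c))) atTop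
      (𝓝 (a-c)) := (tendsto_mul_log_one_add_div_atTop (a-c)).comp h2
  have hB : Tendsto (fun n : ℕ => (((n - k : ℕ):ℝ))/((n:ℝ)+c)) atTop (𝓝 1) :=
    sub_div_tendsto c k
  have hC : Tendsto (fun n : ℕ => ((n - k : ℕ):ℝ) * Real.log (1 + (a-c)/((n:ℝ)+c))) atTop
      (𝓝 (a-c)) := by
    have := hA.mul hB
    rw [mul_one] at this
    apply this.congr'
    filter_upwards [h2.eventually_gt_atTop 0] with n hpos
    field_simp
  have hD := (Real.continuous_exp.tendsto _).comp hC
  apply hD.congr'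
  have h3 : Tendsto (fun n : ℕ => ((n:ℝ) + a)) atTop atTop :=
    tendsto_atTop_add_const_right _ a tendsto_natCast_atTop_atTop
  filter_upwards [h2.eventually_gt_atTop 0, h3.eventually_gt_atTop 0] with n hc ha
  have hr : 1 + (a-c)/((n:ℝ)+c) = ((n:ℝ)+a)/((n:ℝ)+c) := by field_simp; ring
  have hrpos : 0 < ((n:ℝ)+a)/((n:ℝ)+c) := div_pos ha hc
  simp only [Function.comp_apply]
  rw [hr, Real.exp_nat_mul, Real.exp_log hrpos]

noncomputable def gfun (α β : ℝ) (k : ℕ) : ℝ :=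
  if k = 0 then Real.exp (-α)
  else α * (α + k*β)^(k-1) * Real.exp (-(α + k*β)) / (k.factorial)

lemma F_tendsto (α β : ℝ) (hα : 0 < α) (k : ℕ) :
    Tendsto (fun n : ℕ => Ffun α β n k) atTop (𝓝 (gfun α β k)) := by
  rcases Nat.eq_zero_or_pos k with rfl | hk1
  · have h := ratio_pow_tendsto 0 α 0
    rw [show (0:ℝ) - α = -α by ring] at h
    unfold gfun
    rw [if_pos rfl]
    apply h.congr
    intro n
    unfold Ffun Wfun
    rw [if_pos (Nat.zero_le n), if_pos rfl, add_zero, Nat.sub_zero, div_pow]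
  · -- k ≥ 1
    have hCn := ratio_pow_tendsto (-((k:ℝ)*β)) α k
    have hprod : Tendsto (fun n : ℕ =>
        ∏ i ∈ Finset.range k, ((((n - i:ℕ):ℝ))/((n:ℝ)+α))) atTop (𝓝 1) := by
      have := tendsto_finset_prod (f := fun (i : ℕ) (n : ℕ) => (((n - i:ℕ):ℝ))/((n:ℝ)+α))
        (a := fun _ => (1:ℝ)) (Finset.range k) (fun i _ => sub_div_tendsto α i)
      simpa using this
    have hcomb := (hprod.mul hCn).const_mul (α * (α + k*β)^(k-1) / (k.factorial : ℝ))
    have hval : α * (α + k*β)^(k-1) / (k.factorial : ℝ)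
        * (1 * Real.exp (-((k:ℝ)*β) - α)) = gfun α β k := by
      unfold gfun
      rw [if_neg (by omega)]
      rw [one_mul, show -((k:ℝ)*β) - α = -(α + k*β) by ring]
      ring
    rw [hval] at hcomb
    apply hcomb.congr'
    filter_upwards [eventually_ge_atTop k] with n hn
    have hden : (0:ℝ) < (n:ℝ) + α := by positivity
    unfold Ffun Wfun
    rw [if_pos hn, if_neg (by omega)]
    have hchoose : (n.choose k : ℝ) * (k.factorial : ℝ)
        = ∏ i ∈ Finset.range k, (((n - i:ℕ):ℝ)) := by
      rw [← Nat.cast_prod]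
      rw [← Nat.descFactorial_eq_prod_range]
      rw [Nat.descFactorial_eq_factorial_mul_choose]
      push_cast
      ring
    have hsplit : ((n:ℝ)+α)^n = ((n:ℝ)+α)^k * ((n:ℝ)+α)^(n-k) := by
      rw [← pow_add]; congr 1; omega
    have hprodpos : ∏ i ∈ Finset.range k, ((((n - i:ℕ):ℝ))/((n:ℝ)+α))
        = (∏ i ∈ Finset.range k, (((n - i:ℕ):ℝ))) / ((n:ℝ)+α)^k := by
      rw [Finset.prod_div_distrib, Finset.prod_const, Finset.card_range]
    rw [hprodpos, ← hchoose, hsplit, div_pow, show (n:ℝ) + -((k:ℝ)*β) = (n:ℝ) - k*β by ring]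
    have hfac : (0:ℝ) < (k.factorial : ℝ) := by positivity
    field_simp

theorem jain_S0 (α β : ℝ) (hα : 0 < α) (hβ0 : 0 ≤ β) (hβ1 : β < 1) :
    HasSum (fun k : ℕ =>
      (α + β * k) ^ (k : ℕ) / (α + β * k) / (Nat.factorial k) * Real.exp (-(α + β * k)))
      (1 / α) := by
  rcases hβ0.eq_or_lt with hb0 | hb0
  · -- β = 0
    have hβz : β = 0 := hb0.symm
    subst hβz
    have H1 : HasSum (fun k : ℕ => α^k / (k.factorial : ℝ)) (Real.exp α) := by
      rw [Real.exp_eq_exp_ℝ]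
      exact NormedSpace.expSeries_div_hasSum_exp α
    have H2 := (H1.mul_right (Real.exp (-α))).div_const α
    have hv : Real.exp α * Real.exp (-α) / α = 1/α := by
      rw [← Real.exp_add]
      simp
    rw [hv] at H2
    have hfe : (fun k : ℕ => α^k / (k.factorial : ℝ) * Real.exp (-α) / α)
        = (fun k : ℕ => (α + 0 * k) ^ (k : ℕ) / (α + 0 * k) / (Nat.factorial k)
            * Real.exp (-(α + 0 * k))) := by
      funext k
      simp only [zero_mul, add_zero]
      have hfac : ((k.factorial : ℝ)) ≠ 0 := by positivity
      field_simp
    rwa [hfe] at H2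
  · -- 0 < β
    have hb : β < (1+β)/2 := by linarith
    have hb1 : (1+β)/2 ≤ 1 := by linarith
    have hβ'pos : 0 < (1+β)/2 := by linarith
    have hρ0 : (0:ℝ) ≤ (β/((1+β)/2)) * Real.exp ((1+β)/2 - β) := by positivity
    have hρ1 : (β/((1+β)/2)) * Real.exp ((1+β)/2 - β) < 1 := rho_lt_one β hb0 hβ1
    have h_sum : Summable (fun k : ℕ =>
        (max 1 (Real.exp (α*((1+β)/2-β)/(β*((1+β)/2))) * (((1+β)/2)/β)))
          * ((β/((1+β)/2)) * Real.exp ((1+β)/2 - β))^k) :=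
      (summable_geometric_of_lt_one hρ0 hρ1).mul_left _
    have hab : ∀ k : ℕ, Tendsto (fun n : ℕ => Ffun α β n k) atTop (𝓝 (gfun α β k)) :=
      fun k => F_tendsto α β hα k
    have h_bound : ∀ᶠ n : ℕ in atTop, ∀ k : ℕ, ‖Ffun α β n k‖
        ≤ (max 1 (Real.exp (α*((1+β)/2-β)/(β*((1+β)/2))) * (((1+β)/2)/β)))
          * ((β/((1+β)/2)) * Real.exp ((1+β)/2 - β))^k := by
      refine Eventually.of_forall (fun n k => ?_)
      rw [Real.norm_eq_abs, abs_of_nonneg (F_nonneg α β hα (le_of_lt hb0) hβ1.le n k)]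
      exact F_bound α β ((1+β)/2) hα hb0 hb hb1 n k
    have htan := tendsto_tsum_of_dominated_convergence h_sum hab h_bound
    have hconst : ∀ n : ℕ, ∑' k, Ffun α β n k = 1 := fun n => (F_hasSum α β hα n).tsum_eq
    have hlim : Tendsto (fun _ : ℕ => (1:ℝ)) atTop (𝓝 (∑' k, gfun α β k)) :=
      htan.congr hconst
    have htsum : ∑' k, gfun α β k = 1 :=
      tendsto_nhds_unique hlim tendsto_const_nhds
    have hsummable : Summable (gfun α β) := by
      refine Summable.of_norm_bounded h_sum (fun k => ?_)
      exact le_of_tendsto ((continuous_norm.tendsto _).comp (hab k))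
        (h_bound.mono (fun n h => h k))
    have hgsum : HasSum (gfun α β) 1 := htsum ▸ hsummable.hasSum
    have hdiv := hgsum.div_const α
    have hfe : (fun k : ℕ => gfun α β k / α)
        = (fun k : ℕ => (α + β * k) ^ (k : ℕ) / (α + β * k) / (Nat.factorial k)
            * Real.exp (-(α + β * k))) := by
      funext k
      unfold gfun
      rcases Nat.eq_zero_or_pos k with rfl | hk
      · simp only [if_pos rfl, ↓reduceIte, Nat.cast_zero, mul_zero, add_zero, pow_zero,
          Nat.factorial_zero, Nat.cast_one]
        field_simp
      · rw [if_neg (by omega)]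
        have hc : α + (k:ℝ)*β = α + β*(k:ℝ) := by ring
        have hpos : (0:ℝ) < α + β*(k:ℝ) := by positivity
        have hident : (α + β*(k:ℝ))^(k:ℕ) = (α + β*(k:ℝ))^(k-1) * (α + β*(k:ℝ)) := by
          rw [← pow_succ]
          congr 1
          omega
        rw [hc, hident]
        have hfac : ((k.factorial : ℝ)) ≠ 0 := by positivity
        field_simp
    rwa [hfe] at hdiv
end

section
/- For real numbers α > 0 and 0 ≤ β < 1, the series S(1,α,β) = ∑_{k=0}^∞ (α + βk)^{k}/k! · e^{-(α+βk)} converges and equals 1/(1-β); in particular it is independent of α. -/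
namespace Jain

open Finset



def jW (x z : ℝ) : ℕ → ℝ
  | 0 => 1
  | (k+1) => x * (x + (k+1) * z) ^ k

noncomputable def jb (β α : ℝ) (k : ℕ) : ℝ :=
  (α + β * k) ^ k / (Nat.factorial k) * Real.exp (-(α + β * k))

noncomputable def ja (β α : ℝ) (k : ℕ) : ℝ :=
  jW α β k / (Nat.factorial k) * Real.exp (-(α + β * k))

lemma exp_mul_one_sub_le {t : ℝ} : Real.exp t * (1 - t) ≤ 1 := by
  have h := Real.add_one_le_exp (-t)
  calc Real.exp t * (1 - t) ≤ Real.exp t * Real.exp (-t) := by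
        have := Real.exp_pos t
        nlinarith
  _ = 1 := by rw [← Real.exp_add]; simp

lemma exp_sub_sq_le {u : ℝ} (hu : 0 ≤ u) : Real.exp (u - u^2) ≤ 1 + u := by
  have h := Real.add_one_le_exp (u^2 - u)
  have h2 : Real.exp (u - u^2) * Real.exp (u^2 - u) = 1 := by
    rw [← Real.exp_add]; ring_nf; exact Real.exp_zero
  nlinarith [Real.exp_pos (u - u^2), Real.exp_pos (u^2 - u)]

lemma succ_pow_le (k : ℕ) (hk : 1 ≤ k) : ((k:ℝ)+1)^k ≤ (k:ℝ)^k * Real.exp 1 := by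
  have hkR : (0:ℝ) < k := by exact_mod_cast hk
  have h1 : ((k:ℝ)+1) ≤ k * Real.exp (1/k) := by
    have := Real.add_one_le_exp (1/(k:ℝ))
    calc ((k:ℝ)+1) = k * (1 + 1/k) := by field_simp
    _ ≤ k * Real.exp (1/k) := by nlinarith
  calc ((k:ℝ)+1)^k ≤ ((k:ℝ) * Real.exp (1/(k:ℝ)))^k :=
        pow_le_pow_left₀ (by positivity) h1 _
  _ = (k:ℝ)^k * Real.exp (1/(k:ℝ)) ^ k := mul_pow _ _ _
  _ = (k:ℝ)^k * Real.exp 1 := by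
        rw [← Real.exp_nat_mul]
        congr 2
        field_simp

lemma fact_ub : ∀ k : ℕ, (k:ℝ)^k ≤ (Nat.factorial k : ℝ) * Real.exp 1 ^ k := by
  intro k
  induction k with
  | zero => simp
  | succ k ih =>
    have hfact : (Nat.factorial (k+1) : ℝ) = ((k:ℝ)+1) * Nat.factorial k := by
      push_cast [Nat.factorial_succ]; ring
    rcases Nat.eq_zero_or_pos k with hk | hk
    · subst hk
      norm_num [Nat.factorial]
    · have h2 := succ_pow_le k hk
      have he := Real.exp_pos 1
      have hf : (0:ℝ) < Nat.factorial k := by exact_mod_cast k.factorial_pos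
      have cast1 : ((k+1 : ℕ) : ℝ) = (k:ℝ)+1 := by push_cast; ring
      rw [cast1]
      calc ((k:ℝ)+1)^(k+1) = ((k:ℝ)+1) * ((k:ℝ)+1)^k := by ring
      _ ≤ ((k:ℝ)+1) * ((k:ℝ)^k * Real.exp 1) := by
            have : (0:ℝ) < (k:ℝ)+1 := by positivity
            nlinarith
      _ ≤ ((k:ℝ)+1) * (((Nat.factorial k : ℝ) * Real.exp 1 ^ k) * Real.exp 1) := by
            have h3 : (k:ℝ)^k * Real.exp 1 ≤ ((Nat.factorial k : ℝ) * Real.exp 1 ^ k) * Real.exp 1 := by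
              nlinarith
            have : (0:ℝ) < (k:ℝ)+1 := by positivity
            nlinarith
      _ = (Nat.factorial (k+1) : ℝ) * Real.exp 1 ^ (k+1) := by
            rw [hfact]; ring

lemma fact_lb : ∀ k : ℕ, 1 ≤ k → (Nat.factorial k : ℝ) * Real.exp 1 ^ k ≤ Real.exp 1 * (k:ℝ)^(k+1) := by
  intro k
  induction k with
  | zero => intro h; omega
  | succ k ih =>
    intro _
    have hfact : (Nat.factorial (k+1) : ℝ) = ((k:ℝ)+1) * Nat.factorial k := by
      push_cast [Nat.factorial_succ]; ring
    have cast1 : ((k+1 : ℕ) : ℝ) = (k:ℝ)+1 := by push_cast; ring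
    rcases Nat.eq_zero_or_pos k with hk | hk
    · subst hk
      simp [Nat.factorial]
    · have ihk := ih hk
      have hkR : (0:ℝ) < k := by exact_mod_cast hk
      have hexp : Real.exp (1/((k:ℝ)+1)) * ((k:ℝ)/((k:ℝ)+1)) ≤ 1 := by
        have h := exp_mul_one_sub_le (t := 1/((k:ℝ)+1))
        have h1 : 1 - 1/((k:ℝ)+1) = k/((k:ℝ)+1) := by field_simp; ring
        rw [h1] at h; exact h
      have hexp2 : Real.exp (1/((k:ℝ)+1)) ≤ ((k:ℝ)+1)/k := by
        rw [le_div_iff₀ hkR]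
        have hk1 : (0:ℝ) < (k:ℝ)+1 := by positivity
        calc Real.exp (1/((k:ℝ)+1)) * k
            = (Real.exp (1/((k:ℝ)+1)) * ((k:ℝ)/((k:ℝ)+1))) * ((k:ℝ)+1) := by field_simp
        _ ≤ 1 * ((k:ℝ)+1) := by nlinarith
        _ = (k:ℝ)+1 := by ring
      have hkey : Real.exp 1 * (k:ℝ)^(k+1) ≤ ((k:ℝ)+1)^(k+1) := by
        have h2 : Real.exp (1/((k:ℝ)+1)) ^ (k+1) ≤ (((k:ℝ)+1)/k)^(k+1) :=
          pow_le_pow_left₀ (Real.exp_pos _).le hexp2 _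
        have h3 : Real.exp (1/((k:ℝ)+1)) ^ (k+1) = Real.exp 1 := by
          rw [← Real.exp_nat_mul]; congr 1; push_cast; field_simp
        have h4 : (((k:ℝ)+1)/k)^(k+1) = ((k:ℝ)+1)^(k+1) / (k:ℝ)^(k+1) := div_pow _ _ _
        rw [h3, h4] at h2
        rw [← le_div_iff₀ (by positivity)]
        exact h2
      have he := Real.exp_pos 1
      rw [cast1, hfact]
      calc ((k:ℝ)+1) * (Nat.factorial k : ℝ) * Real.exp 1 ^ (k+1)
          = ((k:ℝ)+1) * Real.exp 1 * ((Nat.factorial k : ℝ) * Real.exp 1 ^ k) := by ring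
      _ ≤ ((k:ℝ)+1) * Real.exp 1 * (Real.exp 1 * (k:ℝ)^(k+1)) := by
            have : (0:ℝ) < ((k:ℝ)+1) * Real.exp 1 := by positivity
            nlinarith
      _ = Real.exp 1 * (((k:ℝ)+1) * (Real.exp 1 * (k:ℝ)^(k+1))) := by ring
      _ ≤ Real.exp 1 * (((k:ℝ)+1) * ((k:ℝ)+1)^(k+1)) := by
            gcongr <;> first | positivity | exact hkey
      _ = Real.exp 1 * ((k:ℝ)+1)^(k+1+1) := by ring



open Finset


lemma jPS (n : ℕ) (g : ℕ → ℝ) :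
    ∑ k ∈ Finset.range (n+2), (-1:ℝ)^k * ((n+1).choose k) * g k
      = ∑ k ∈ Finset.range (n+1), (-1:ℝ)^k * (n.choose k) * (g k - g (k+1)) := by
  have hL : ∑ k ∈ Finset.range (n+2), (-1:ℝ)^k * ((n+1).choose k) * g k
      = g 0 + ∑ k ∈ Finset.range (n+1), (-1:ℝ)^(k+1) * ((n+1).choose (k+1)) * g (k+1) := by
    rw [Finset.sum_range_succ'] ; simp [add_comm]
  have hsplit : ∀ k, ((n+1).choose (k+1) : ℝ) = (n.choose k : ℝ) + (n.choose (k+1) : ℝ) := by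
    intro k; rw [Nat.choose_succ_succ']; push_cast; ring
  have hT : ∑ k ∈ Finset.range (n+1), (-1:ℝ)^k * (n.choose (k+1)) * g (k+1)
      = ∑ k ∈ Finset.range n, (-1:ℝ)^k * (n.choose (k+1)) * g (k+1) := by
    rw [Finset.sum_range_succ]; simp [Nat.choose_succ_self]
  have hU : ∑ k ∈ Finset.range (n+1), (-1:ℝ)^k * (n.choose k) * g k
      = g 0 - ∑ k ∈ Finset.range n, (-1:ℝ)^k * (n.choose (k+1)) * g (k+1) := by
    rw [Finset.sum_range_succ']
    simp only [pow_succ, Nat.choose_zero_right, Nat.cast_one, pow_zero, one_mul, mul_one]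
    have hneg : ∑ x ∈ Finset.range n, (-1:ℝ)^x * -1 * (n.choose (x+1)) * g (x+1)
        = - ∑ k ∈ Finset.range n, (-1:ℝ)^k * (n.choose (k+1)) * g (k+1) := by
      rw [← Finset.sum_neg_distrib]
      exact Finset.sum_congr rfl (fun k _ => by ring)
    rw [hneg]; ring
  calc ∑ k ∈ Finset.range (n+2), (-1:ℝ)^k * ((n+1).choose k) * g k
      = g 0 + ∑ k ∈ Finset.range (n+1), (-1:ℝ)^(k+1) * ((n+1).choose (k+1)) * g (k+1) := hL
  _ = g 0 + ∑ k ∈ Finset.range (n+1),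
        ((-1:ℝ)^(k+1) * (n.choose k) * g (k+1) + (-1:ℝ)^(k+1) * (n.choose (k+1)) * g (k+1)) := by
      congr 1
      apply Finset.sum_congr rfl
      intro k _
      rw [hsplit k]; ring
  _ = (∑ k ∈ Finset.range (n+1), (-1:ℝ)^(k+1) * (n.choose k) * g (k+1))
        + (g 0 + ∑ k ∈ Finset.range (n+1), (-1:ℝ)^(k+1) * (n.choose (k+1)) * g (k+1)) := by
      rw [Finset.sum_add_distrib]; ring
  _ = (∑ k ∈ Finset.range (n+1), (-1:ℝ)^(k+1) * (n.choose k) * g (k+1))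
        + (g 0 - ∑ k ∈ Finset.range (n+1), (-1:ℝ)^k * (n.choose (k+1)) * g (k+1)) := by
      have hneg2 : ∑ k ∈ Finset.range (n+1), (-1:ℝ)^(k+1) * (n.choose (k+1)) * g (k+1)
          = - ∑ k ∈ Finset.range (n+1), (-1:ℝ)^k * (n.choose (k+1)) * g (k+1) := by
        rw [← Finset.sum_neg_distrib]
        exact Finset.sum_congr rfl (fun k _ => by ring)
      rw [hneg2]; ring
  _ = (∑ k ∈ Finset.range (n+1), (-1:ℝ)^(k+1) * (n.choose k) * g (k+1))
        + ∑ k ∈ Finset.range (n+1), (-1:ℝ)^k * (n.choose k) * g k := by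
      rw [hU, ← hT]
  _ = ∑ k ∈ Finset.range (n+1), (-1:ℝ)^k * (n.choose k) * (g k - g (k+1)) := by
      rw [← Finset.sum_add_distrib]
      apply Finset.sum_congr rfl
      intro k _; ring

lemma jFD (z : ℝ) : ∀ n : ℕ, ∀ j, j < n → ∀ x : ℝ,
    ∑ k ∈ Finset.range (n+1), (-1:ℝ)^k * (n.choose k) * (x + k*z)^j = 0 := by
  intro n
  induction n with
  | zero => intro j hj; omega
  | succ n ih =>
    intro j hj x
    rw [jPS n (fun k => (x + k*z)^j)]
    have hterm : ∀ k : ℕ, (x + (k:ℝ)*z)^j - (x + ((k+1:ℕ):ℝ)*z)^j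
        = - ∑ i ∈ Finset.range j, (j.choose i : ℝ) * z^(j-i) * (x + k*z)^i := by
      intro k
      have hexp : (x + ((k+1:ℕ):ℝ)*z)^j
          = ∑ i ∈ Finset.range (j+1), (x + (k:ℝ)*z)^i * z^(j-i) * (j.choose i) := by
        have h5 : (x + ((k+1:ℕ):ℝ)*z) = (x + (k:ℝ)*z) + z := by push_cast; ring
        rw [h5, add_pow]
      rw [hexp, Finset.sum_range_succ]
      simp only [Nat.choose_self, Nat.sub_self, pow_zero, Nat.cast_one, mul_one]
      have hS : ∑ i ∈ Finset.range j, (j.choose i : ℝ) * z^(j-i) * (x + k*z)^i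
          = ∑ i ∈ Finset.range j, (x + (k:ℝ)*z)^i * z^(j-i) * (j.choose i) :=
        Finset.sum_congr rfl (fun i _ => by ring)
      rw [hS]
      ring
    calc ∑ k ∈ Finset.range (n+1), (-1:ℝ)^k * (n.choose k) * ((x + k*z)^j - (x + ((k+1:ℕ):ℝ)*z)^j)
        = ∑ k ∈ Finset.range (n+1), ∑ i ∈ Finset.range j,
            (-((j.choose i : ℝ) * z^(j-i)) * ((-1:ℝ)^k * (n.choose k) * (x + k*z)^i)) := by
          apply Finset.sum_congr rfl
          intro k _
          rw [hterm k, mul_neg, Finset.mul_sum, ← Finset.sum_neg_distrib]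
          exact Finset.sum_congr rfl (fun i _ => by ring)
    _ = ∑ i ∈ Finset.range j, ∑ k ∈ Finset.range (n+1),
            (-((j.choose i : ℝ) * z^(j-i)) * ((-1:ℝ)^k * (n.choose k) * (x + k*z)^i)) :=
          Finset.sum_comm
    _ = 0 := by
          apply Finset.sum_eq_zero
          intro i hi
          have hij : i < j := Finset.mem_range.mp hi
          rw [← Finset.mul_sum, ih i (by omega) x, mul_zero]



open Finset



lemma jW_mul_pow (x z : ℝ) (n : ℕ) : ∀ k, k ≤ n+1 →
    jW x z k * (x + (k:ℝ)*z)^(n+1-k) = x * (x + (k:ℝ)*z)^n := by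
  intro k hk
  match k with
  | 0 => simp [jW, pow_succ, mul_comm]
  | (j+1) =>
    show x * (x + ((j:ℝ)+1) * z) ^ j * (x + ((j+1:ℕ):ℝ)*z)^(n+1-(j+1)) = _
    have hc : ((j+1:ℕ):ℝ) = (j:ℝ)+1 := by push_cast; ring
    rw [hc, mul_assoc, ← pow_add]
    congr 2
    omega

lemma jAbel (z x : ℝ) : ∀ (n : ℕ) (y : ℝ),
    ∑ k ∈ Finset.range (n+1), (n.choose k : ℝ) * jW x z k * (y + ((n-k : ℕ):ℝ)*z)^((n-k : ℕ))
      = (x + y + (n:ℝ)*z)^n := by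
  intro n
  induction n with
  | zero => intro y; simp [jW]
  | succ n ih =>
    intro y
    set c : ℝ := x + ((n:ℝ)+1)*z with hc
    -- the function F and the comparison function G
    set F : ℝ → ℝ := fun t => ∑ k ∈ Finset.range (n+2),
      ((n+1).choose k : ℝ) * jW x z k * (t + ((n+1-k : ℕ):ℝ)*z)^((n+1-k : ℕ)) with hF
    set G : ℝ → ℝ := fun t => (t + c)^(n+1) with hG
    have hGd : ∀ t : ℝ, HasDerivAt G (((n:ℝ)+1) * (t + c)^n) t := by
      intro t
      have h1 : HasDerivAt (fun t : ℝ => t + c) 1 t := (hasDerivAt_id t).add_const c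
      have h2 := h1.fun_pow (n+1)
      simp only [mul_one, Nat.add_sub_cancel] at h2
      convert h2 using 1
      exacts [rfl, rfl, by push_cast; ring]
    have hFd : ∀ t : ℝ, HasDerivAt F (((n:ℝ)+1) * (t + c)^n) t := by
      intro t
      have h1 : HasDerivAt F (∑ k ∈ Finset.range (n+2),
          ((n+1).choose k : ℝ) * jW x z k *
            (((n+1-k : ℕ):ℝ) * (t + ((n+1-k : ℕ):ℝ)*z)^((n+1-k : ℕ)-1)) ) t := by
        apply HasDerivAt.fun_sum
        intro k _
        have h2 : HasDerivAt (fun t : ℝ => t + ((n+1-k : ℕ):ℝ)*z) 1 t :=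
          (hasDerivAt_id t).add_const _
        have h3 := (h2.fun_pow ((n+1-k : ℕ))).const_mul (((n+1).choose k : ℝ) * jW x z k)
        simpa using h3
      have heq : ∑ k ∈ Finset.range (n+2),
          ((n+1).choose k : ℝ) * jW x z k *
            (((n+1-k : ℕ):ℝ) * (t + ((n+1-k : ℕ):ℝ)*z)^((n+1-k : ℕ)-1))
          = ((n:ℝ)+1) * (t + c)^n := by
        rw [Finset.sum_range_succ]
        simp only [Nat.sub_self, Nat.cast_zero, zero_mul, mul_zero, add_zero]
        have hstep : ∀ k ∈ Finset.range (n+1),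
            ((n+1).choose k : ℝ) * jW x z k *
              (((n+1-k : ℕ):ℝ) * (t + ((n+1-k : ℕ):ℝ)*z)^((n+1-k : ℕ)-1))
            = ((n:ℝ)+1) * ((n.choose k : ℝ) * jW x z k * ((t+z) + ((n-k : ℕ):ℝ)*z)^((n-k : ℕ))) := by
          intro k hk
          have hkn : k ≤ n := by
            have := Finset.mem_range.mp hk; omega
          have hnat : ((n+1).choose k) * (n+1-k) = (n+1) * (n.choose k) := by
            have h4 := Nat.choose_succ_right_eq (n+1) k
            have h5 := Nat.add_one_mul_choose_eq n k
            omega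
          have hnatR : ((n+1).choose k : ℝ) * ((n+1-k : ℕ):ℝ) = ((n:ℝ)+1) * (n.choose k : ℝ) := by
            exact_mod_cast congrArg (Nat.cast : ℕ → ℝ) hnat
          have hsub : ((n+1-k : ℕ):ℝ) = ((n-k : ℕ):ℝ) + 1 := by
            have : (n+1-k : ℕ) = (n-k) + 1 := by omega
            rw [this]; push_cast; ring
          have hsub2 : (n+1-k : ℕ) - 1 = (n-k : ℕ) := by omega
          have hbase : t + ((n+1-k : ℕ):ℝ)*z = (t+z) + ((n-k : ℕ):ℝ)*z := by
            rw [hsub]; ring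
          rw [hsub2, hbase]
          calc ((n+1).choose k : ℝ) * jW x z k *
              (((n+1-k : ℕ):ℝ) * ((t+z) + ((n-k : ℕ):ℝ)*z)^((n-k : ℕ)))
              = (((n+1).choose k : ℝ) * ((n+1-k : ℕ):ℝ)) * jW x z k *
                  ((t+z) + ((n-k : ℕ):ℝ)*z)^((n-k : ℕ)) := by ring
          _ = _ := by rw [hnatR]; ring
        rw [Finset.sum_congr rfl hstep, ← Finset.mul_sum, ih (t+z)]
        congr 2
        rw [hc]; ring
      rw [← heq]
      exact h1
    -- F - G has zero derivative hence is constant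
    have hHd : ∀ t : ℝ, HasDerivAt (fun t => F t - G t) 0 t := by
      intro t
      have := (hFd t).fun_sub (hGd t)
      rw [sub_self] at this
      exact this
    have hdiff : Differentiable ℝ (fun t => F t - G t) := fun t => (hHd t).differentiableAt
    have hderiv0 : ∀ t : ℝ, deriv (fun t => F t - G t) t = 0 := fun t => (hHd t).deriv
    have hconst : ∀ t : ℝ, F t - G t = F (-c) - G (-c) := by
      intro t
      exact is_const_of_deriv_eq_zero hdiff hderiv0 t (-c)
    -- evaluate at -c
    have hG0 : G (-c) = 0 := by
      simp only [hG]
      rw [neg_add_cancel]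
      exact zero_pow (Nat.succ_ne_zero n)
    have hF0 : F (-c) = 0 := by
      have hterm : ∀ k ∈ Finset.range (n+2),
          ((n+1).choose k : ℝ) * jW x z k * ((-c) + ((n+1-k : ℕ):ℝ)*z)^((n+1-k : ℕ))
          = ((-1:ℝ)^(n+1) * x) * ((-1:ℝ)^k * (((n+1).choose k : ℝ)) * (x + (k:ℝ)*z)^n) := by
        intro k hk
        have hkn : k ≤ n+1 := by have := Finset.mem_range.mp hk; omega
        have hcast : ((n+1-k : ℕ):ℝ) = ((n:ℝ)+1) - (k:ℝ) := by
          rw [Nat.cast_sub hkn]; push_cast; ring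
        have hbase : (-c) + ((n+1-k : ℕ):ℝ)*z = -(x + (k:ℝ)*z) := by
          rw [hcast, hc]; ring
        rw [hbase, neg_pow]
        have hsign : (-1:ℝ)^(n+1-k) = (-1:ℝ)^(n+1) * (-1:ℝ)^k := by
          have h6 : (n+1-k) + k = n+1 := by omega
          have h8 : (-1:ℝ)^k * (-1:ℝ)^k = 1 := by
            rw [← mul_pow]; norm_num
          calc (-1:ℝ)^(n+1-k) = (-1:ℝ)^(n+1-k) * ((-1:ℝ)^k * (-1:ℝ)^k) := by rw [h8, mul_one]
          _ = ((-1:ℝ)^(n+1-k) * (-1:ℝ)^k) * (-1:ℝ)^k := by ring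
          _ = (-1:ℝ)^(n+1) * (-1:ℝ)^k := by rw [← pow_add, h6]
        rw [hsign]
        have := jW_mul_pow x z n k hkn
        calc ((n+1).choose k : ℝ) * jW x z k *
            ((-1:ℝ)^(n+1) * (-1:ℝ)^k * (x + (k:ℝ)*z)^(n+1-k))
            = ((-1:ℝ)^(n+1) * (-1:ℝ)^k * ((n+1).choose k : ℝ)) *
                (jW x z k * (x + (k:ℝ)*z)^(n+1-k)) := by ring
        _ = ((-1:ℝ)^(n+1) * (-1:ℝ)^k * ((n+1).choose k : ℝ)) * (x * (x + (k:ℝ)*z)^n) := by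
              rw [this]
        _ = _ := by ring
      simp only [hF]
      rw [Finset.sum_congr rfl hterm, ← Finset.mul_sum]
      rw [jFD z (n+1) n (by omega) x, mul_zero]
    have hfinal : F y = G y := by
      have := hconst y
      rw [hF0, hG0] at this
      linarith
    -- conclude
    calc ∑ k ∈ Finset.range (n+1+1), ((n+1).choose k : ℝ) * jW x z k *
          (y + ((n+1-k : ℕ):ℝ)*z)^((n+1-k : ℕ)) = F y := rfl
    _ = G y := hfinal
    _ = (x + y + ((n+1 : ℕ):ℝ)*z)^(n+1) := by
        simp only [hG, hc]; push_cast; ring_nf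



open Finset




variable {β α : ℝ}

lemma lam_pos (hβ0 : 0 ≤ β) (hα : 0 < α) (k : ℕ) : 0 < α + β * k := by positivity

lemma jb_pos (hβ0 : 0 ≤ β) (hα : 0 < α) (k : ℕ) : 0 < jb β α k := by
  have := lam_pos hβ0 hα k
  have hf : (0:ℝ) < (Nat.factorial k : ℝ) := by exact_mod_cast k.factorial_pos
  unfold jb
  positivity

lemma jW_eq (x z : ℝ) (k : ℕ) (hk : 1 ≤ k) : jW x z k = x * (x + (k:ℝ) * z)^(k-1) := by
  obtain ⟨j, rfl⟩ : ∃ j, k = j + 1 := ⟨k-1, by omega⟩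
  simp [jW]

lemma jW_nonneg (hβ0 : 0 ≤ β) (hα : 0 < α) (k : ℕ) : 0 ≤ jW α β k := by
  match k with
  | 0 => norm_num [jW]
  | (j+1) =>
    rw [jW_eq α β (j+1) (by omega)]
    positivity

lemma ja_nonneg (hβ0 : 0 ≤ β) (hα : 0 < α) (k : ℕ) : 0 ≤ ja β α k := by
  have h1 := jW_nonneg (α := α) (β := β) hβ0 hα k
  have hf : (0:ℝ) < (Nat.factorial k : ℝ) := by exact_mod_cast k.factorial_pos
  unfold ja
  positivity

lemma ja_zero_pos (hβ0 : 0 ≤ β) (hα : 0 < α) : 0 < ja β α 0 := by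
  show (0:ℝ) < jW α β 0 / (Nat.factorial 0) * Real.exp (-(α + β * (0:ℕ)))
  norm_num [jW]
  exact Real.exp_pos _

lemma jW_le (hβ0 : 0 ≤ β) (hα : 0 < α) (k : ℕ) : jW α β k ≤ (α + β * k)^k := by
  match k with
  | 0 => simp [jW]
  | (j+1) =>
    rw [jW_eq α β (j+1) (by omega)]
    have hcomm : α + ((j+1:ℕ):ℝ) * β = α + β * ((j+1:ℕ):ℝ) := by ring
    rw [hcomm]
    have hy : (0:ℝ) < α + β * ((j+1:ℕ):ℝ) := by
      have : (0:ℝ) ≤ ((j+1:ℕ):ℝ) := by positivity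
      nlinarith
    have hred : (j+1) - 1 = j := by omega
    rw [hred]
    calc α * (α + β * ((j+1:ℕ):ℝ)) ^ j
        ≤ (α + β * ((j+1:ℕ):ℝ)) * (α + β * ((j+1:ℕ):ℝ)) ^ j := by
          have h8 : α ≤ α + β * ((j+1:ℕ):ℝ) := by nlinarith
          gcongr
    _ = (α + β * ((j+1:ℕ):ℝ)) ^ (j+1) := by rw [pow_succ]; ring

lemma ja_le_jb (hβ0 : 0 ≤ β) (hα : 0 < α) (k : ℕ) : ja β α k ≤ jb β α k := by
  unfold ja jb
  have hf : (0:ℝ) < (Nat.factorial k : ℝ) := by exact_mod_cast k.factorial_pos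
  have he := (Real.exp_pos (-(α + β * k))).le
  gcongr <;> first | exact jW_le hβ0 hα k | exact jW_nonneg hβ0 hα k | positivity

lemma jb_summable (hβ0 : 0 ≤ β) (hβ1 : β < 1) (hα : 0 < α) : Summable (jb β α) := by
  set q : ℝ := β * Real.exp (1 - β) with hqdef
  have hq1 : q < 1 := by
    have hne : β - 1 ≠ 0 := by intro h; apply absurd hβ1; linarith [sub_eq_zero.mp h]
    have h := Real.add_one_lt_exp hne
    have h2 : β < Real.exp (β - 1) := by linarith
    have h3 : Real.exp (β - 1) * Real.exp (1 - β) = 1 := by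
      rw [← Real.exp_add]; ring_nf; exact Real.exp_zero
    have he := Real.exp_pos (1 - β)
    nlinarith
  have hq0 : 0 ≤ q := by positivity
  set r : ℝ := (1 + q)/2 with hrdef
  have hr1 : r < 1 := by rw [hrdef]; linarith
  have hqr : q < r := by rw [hrdef]; linarith
  have hr0 : 0 < r := by rw [hrdef]; linarith
  obtain ⟨N, hN⟩ := exists_nat_ge (Real.exp (1 - β) * (α + β) / (r - q))
  apply summable_of_ratio_norm_eventually_le hr1
  filter_upwards [Filter.eventually_ge_atTop N] with k hk
  have hkN : (N:ℝ) ≤ k := by exact_mod_cast hk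
  rw [Real.norm_of_nonneg (jb_pos hβ0 hα (k+1)).le, Real.norm_of_nonneg (jb_pos hβ0 hα k).le]
  set lam : ℝ := α + β * k with hlam
  have hlam0 : 0 < lam := lam_pos hβ0 hα k
  have hmu : α + β * ((k+1 : ℕ):ℝ) = lam + β := by rw [hlam]; push_cast; ring
  have hfk : (0:ℝ) < (Nat.factorial k : ℝ) := by exact_mod_cast k.factorial_pos
  -- power bound
  have hpow : (lam + β)^k ≤ lam^k * Real.exp 1 := by
    have h1 : lam + β ≤ lam * Real.exp (β / lam) := by
      have hh := Real.add_one_le_exp (β / lam)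
      calc lam + β = lam * (1 + β/lam) := by field_simp
      _ ≤ lam * Real.exp (β/lam) := by nlinarith
    calc (lam + β)^k ≤ (lam * Real.exp (β/lam))^k :=
          pow_le_pow_left₀ (by positivity) h1 _
    _ = lam^k * Real.exp (β/lam) ^ k := mul_pow _ _ _
    _ = lam^k * Real.exp (k * (β/lam)) := by rw [← Real.exp_nat_mul]
    _ ≤ lam^k * Real.exp 1 := by
        have harg : (k:ℝ) * (β/lam) ≤ 1 := by
          have hexpand : (k:ℝ) * (β/lam) = (β * k)/lam := by ring
          rw [hexpand, div_le_one hlam0]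
          linarith
        have := Real.exp_le_exp.mpr harg
        nlinarith [pow_pos hlam0 k]
  -- linear bound
  have hkey : Real.exp (1-β) * (lam + β) ≤ r * ((k:ℝ)+1) := by
    have hrq : (0:ℝ) < r - q := by linarith
    rw [div_le_iff₀ hrq] at hN
    have h5 : (r - q) * N ≤ (r - q) * k := by nlinarith
    have h6 : Real.exp (1-β) * (β * k) = q * k := by rw [hqdef]; ring
    have h7 : Real.exp (1-β) * (lam + β) = Real.exp (1-β) * (α + β) + Real.exp (1-β) * (β * k) := by
      rw [hlam]; ring
    nlinarith
  -- assemble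
  have hjb1 : jb β α (k+1) = (lam+β)^(k+1) * Real.exp (-(lam+β)) / (Nat.factorial (k+1)) := by
    unfold jb
    rw [hmu]; ring
  have hjb0 : jb β α k = lam^k * Real.exp (-lam) / (Nat.factorial k) := by
    unfold jb
    rw [← hlam]; ring
  rw [hjb1, hjb0]
  have hfin : (lam+β)^(k+1) ≤ r * ((k:ℝ)+1) * Real.exp β * lam^k := by
    have e1 : Real.exp (1-β) * Real.exp β = Real.exp 1 := by
      rw [← Real.exp_add]; congr 1; ring
    have hlp := pow_pos hlam0 k
    have hlb0 : (0:ℝ) ≤ lam + β := by linarith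
    calc (lam+β)^(k+1) = (lam+β) * (lam+β)^k := by rw [pow_succ]; ring
    _ ≤ (lam+β) * (lam^k * Real.exp 1) := by gcongr
    _ = (Real.exp (1-β) * (lam+β)) * Real.exp β * lam^k := by
        rw [← e1]; ring
    _ ≤ (r * ((k:ℝ)+1)) * Real.exp β * lam^k := by
        have he2 := (Real.exp_pos β).le
        gcongr
  calc (lam+β)^(k+1) * Real.exp (-(lam+β)) / (Nat.factorial (k+1))
      ≤ (r * ((k:ℝ)+1) * Real.exp β * lam^k) * Real.exp (-(lam+β)) / (Nat.factorial (k+1)) := by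
        have h9 : (0:ℝ) < (Nat.factorial (k+1) : ℝ) := by exact_mod_cast (k+1).factorial_pos
        gcongr
  _ = r * (lam^k * Real.exp (-lam) / (Nat.factorial k)) := by
      have e3 : Real.exp β * Real.exp (-(lam+β)) = Real.exp (-lam) := by
        rw [← Real.exp_add]; congr 1; ring
      have hfs : (Nat.factorial (k+1) : ℝ) = ((k:ℝ)+1) * (Nat.factorial k) := by
        rw [Nat.factorial_succ]; push_cast; ring
      have e4 : r * ((k:ℝ)+1) * Real.exp β * lam^k * Real.exp (-(lam+β))
          = r * ((k:ℝ)+1) * (lam^k * Real.exp (-lam)) := by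
        calc r * ((k:ℝ)+1) * Real.exp β * lam^k * Real.exp (-(lam+β))
            = r * ((k:ℝ)+1) * lam^k * (Real.exp β * Real.exp (-(lam+β))) := by ring
        _ = r * ((k:ℝ)+1) * (lam^k * Real.exp (-lam)) := by rw [e3]; ring
      rw [hfs, e4]
      have hk1 : ((k:ℝ)+1) ≠ 0 := by positivity
      have hfk' : (Nat.factorial k : ℝ) ≠ 0 := ne_of_gt hfk
      field_simp

lemma ja_summable (hβ0 : 0 ≤ β) (hβ1 : β < 1) (hα : 0 < α) : Summable (ja β α) :=
  Summable.of_nonneg_of_le (ja_nonneg hβ0 hα) (ja_le_jb hβ0 hα) (jb_summable hβ0 hβ1 hα)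


lemma norm_summable_of_nonneg {f : ℕ → ℝ} (hf : ∀ k, 0 ≤ f k) (h : Summable f) :
    Summable (fun k => ‖f k‖) := by
  have : (fun k => ‖f k‖) = f := funext (fun k => Real.norm_of_nonneg (hf k))
  rw [this]; exact h

lemma jE1 (hβ0 : 0 ≤ β) (hβ1 : β < 1) {γ : ℝ} (hα : 0 < α) (hγ : 0 < γ) :
    (∑' k, ja β α k) * (∑' k, jb β γ k) = ∑' k, jb β (α+γ) k := by
  have ha := ja_summable hβ0 hβ1 hα
  have hb := jb_summable hβ0 hβ1 hγ
  have han := norm_summable_of_nonneg (ja_nonneg hβ0 hα) ha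
  have hbn := norm_summable_of_nonneg (fun k => (jb_pos hβ0 hγ k).le) hb
  rw [tsum_mul_tsum_eq_tsum_sum_antidiagonal_of_summable_norm han hbn]
  apply tsum_congr
  intro n
  rw [Finset.Nat.sum_antidiagonal_eq_sum_range_succ (fun k l => ja β α k * jb β γ l)]
  have hfn : (0:ℝ) < (Nat.factorial n : ℝ) := by exact_mod_cast n.factorial_pos
  have hterm : ∀ k ∈ Finset.range (n+1),
      ja β α k * jb β γ (n-k)
      = ((n.choose k : ℝ) * jW α β k * (γ + ((n-k : ℕ):ℝ)*β)^((n-k : ℕ)))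
          * (Real.exp (-((α+γ) + β*n)) / (Nat.factorial n)) := by
    intro k hk
    have hkn : k ≤ n := by have := Finset.mem_range.mp hk; omega
    have hfk : (0:ℝ) < (Nat.factorial k : ℝ) := by exact_mod_cast k.factorial_pos
    have hfm : (0:ℝ) < (Nat.factorial (n-k) : ℝ) := by exact_mod_cast (n-k).factorial_pos
    have hchoose : (n.choose k : ℝ)
        = (Nat.factorial n : ℝ) / ((Nat.factorial k : ℝ) * (Nat.factorial (n-k) : ℝ)) :=
      Nat.cast_choose ℝ hkn
    have hexp : Real.exp (-(α + β*(k:ℝ))) * Real.exp (-(γ + β*((n-k : ℕ):ℝ)))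
        = Real.exp (-((α+γ) + β*(n:ℝ))) := by
      rw [← Real.exp_add]; congr 1
      have hcast : ((n-k : ℕ):ℝ) = (n:ℝ) - k := by rw [Nat.cast_sub hkn]
      rw [hcast]; ring
    show jW α β k / (Nat.factorial k) * Real.exp (-(α + β*(k:ℝ)))
        * ((γ + β*((n-k : ℕ):ℝ))^((n-k : ℕ)) / (Nat.factorial (n-k))
            * Real.exp (-(γ + β*((n-k : ℕ):ℝ)))) = _
    have hXcomm : γ + β*((n-k : ℕ):ℝ) = γ + ((n-k : ℕ):ℝ)*β := by ring
    calc jW α β k / (Nat.factorial k) * Real.exp (-(α + β*(k:ℝ)))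
        * ((γ + β*((n-k : ℕ):ℝ))^((n-k : ℕ)) / (Nat.factorial (n-k))
            * Real.exp (-(γ + β*((n-k : ℕ):ℝ))))
        = jW α β k * (γ + β*((n-k : ℕ):ℝ))^((n-k : ℕ))
            * (Real.exp (-(α + β*(k:ℝ))) * Real.exp (-(γ + β*((n-k : ℕ):ℝ))))
            / ((Nat.factorial k : ℝ) * (Nat.factorial (n-k) : ℝ)) := by ring
    _ = jW α β k * (γ + β*((n-k : ℕ):ℝ))^((n-k : ℕ)) * Real.exp (-((α+γ) + β*(n:ℝ)))
            / ((Nat.factorial k : ℝ) * (Nat.factorial (n-k) : ℝ)) := by rw [hexp]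
    _ = ((n.choose k : ℝ) * jW α β k * (γ + ((n-k : ℕ):ℝ)*β)^((n-k : ℕ)))
          * (Real.exp (-((α+γ) + β*(n:ℝ))) / (Nat.factorial n)) := by
        rw [hchoose, hXcomm]
        field_simp
  rw [Finset.sum_congr rfl hterm, ← Finset.sum_mul]
  rw [jAbel β α n γ]
  show (α + γ + (n:ℝ)*β)^n * (Real.exp (-((α+γ) + β*(n:ℝ))) / (Nat.factorial n))
      = ((α+γ) + β*(n:ℝ))^n / (Nat.factorial n) * Real.exp (-((α+γ) + β*(n:ℝ)))
  rw [show α + γ + (n:ℝ)*β = (α+γ) + β*(n:ℝ) from by ring]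
  ring

lemma jE2 (hβ0 : 0 ≤ β) (hβ1 : β < 1) (hα : 0 < α) :
    ∑' k, jb β α k = (∑' k, ja β α k) + β * ∑' k, jb β (α+β) k := by
  have hb := jb_summable hβ0 hβ1 hα
  have ha := ja_summable hβ0 hβ1 hα
  have hc : Summable (fun k => jb β α k - ja β α k) := hb.sub ha
  have hdiff : ∀ k : ℕ, jb β α (k+1) - ja β α (k+1) = β * jb β (α+β) k := by
    intro k
    have hZ1 : α + β*((k+1 : ℕ):ℝ) = (α+β) + β*(k:ℝ) := by push_cast; ring
    have hZ2 : α + ((k+1 : ℕ):ℝ)*β = (α+β) + β*(k:ℝ) := by push_cast; ring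
    have hfs : (Nat.factorial (k+1) : ℝ) = ((k:ℝ)+1) * (Nat.factorial k) := by
      rw [Nat.factorial_succ]; push_cast; ring
    have hfk : (0:ℝ) < (Nat.factorial k : ℝ) := by exact_mod_cast k.factorial_pos
    have hred : (k+1) - 1 = k := by omega
    unfold jb ja
    rw [jW_eq α β (k+1) (by omega), hred, hZ1, hZ2, hfs, pow_succ]
    field_simp
    ring
  have h0 : jb β α 0 - ja β α 0 = 0 := by
    unfold jb ja
    norm_num [jW]
  have hsplit : ∑' k, (jb β α k - ja β α k) = β * ∑' k, jb β (α+β) k := by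
    rw [Summable.tsum_eq_zero_add hc, h0, zero_add]
    calc ∑' k, (jb β α (k+1) - ja β α (k+1)) = ∑' k, β * jb β (α+β) k := by
          exact tsum_congr (fun k => hdiff k)
    _ = β * ∑' k, jb β (α+β) k := tsum_mul_left
  have hsub : ∑' k, (jb β α k - ja β α k) = (∑' k, jb β α k) - ∑' k, ja β α k :=
    Summable.tsum_sub hb ha
  rw [hsub] at hsplit
  linarith

lemma jb_le_one (hβ0 : 0 ≤ β) (hα : 0 < α) (k : ℕ) : jb β α k ≤ 1 := by
  unfold jb
  have hlam : (0:ℝ) < α + β*(k:ℝ) := lam_pos hβ0 hα k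
  have h3 : (α + β*(k:ℝ))^k/(Nat.factorial k : ℝ)
      ≤ ∑ i ∈ Finset.range (k+1), (α + β*(k:ℝ))^i / (Nat.factorial i : ℝ) := by
    apply Finset.single_le_sum (f := fun i => (α + β*(k:ℝ))^i/(Nat.factorial i : ℝ))
    · intro i _
      have : (0:ℝ) < (Nat.factorial i : ℝ) := by exact_mod_cast i.factorial_pos
      positivity
    · exact Finset.self_mem_range_succ k
  have h2 := Real.sum_le_exp_of_nonneg hlam.le (k+1)
  have h1 : (α + β*(k:ℝ))^k/(Nat.factorial k : ℝ) ≤ Real.exp (α + β*(k:ℝ)) := le_trans h3 h2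
  calc (α + β*(k:ℝ))^k/(Nat.factorial k : ℝ) * Real.exp (-(α + β*(k:ℝ)))
      ≤ Real.exp (α + β*(k:ℝ)) * Real.exp (-(α + β*(k:ℝ))) := by
        have := (Real.exp_pos (-(α + β*(k:ℝ)))).le
        exact mul_le_mul_of_nonneg_right h1 this
  _ = 1 := by rw [← Real.exp_add, add_neg_cancel, Real.exp_zero]

lemma xe_mono {x x0 : ℝ} (hx : 0 ≤ x) (hxx0 : x ≤ x0) (hx01 : x0 ≤ 1) :
    x * Real.exp (1 - x) ≤ x0 * Real.exp (1 - x0) := by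
  rcases eq_or_lt_of_le (hx.trans hxx0) with h0 | h0
  · have hx0' : x = 0 := le_antisymm (hxx0.trans h0.symm.le) hx
    rw [hx0', ← h0]
  · have h1 : x ≤ x0 * Real.exp (-(x0 - x)) := by
      have h2 : 1 - (x0 - x) ≤ Real.exp (-(x0 - x)) := by
        have := Real.add_one_le_exp (-(x0-x)); linarith
      have h4 : (x0 - x) ≤ (x0 - x)/x0 := by
        rw [le_div_iff₀ h0]; nlinarith
      have h5 : x/x0 = 1 - (x0-x)/x0 := by field_simp; ring
      have h6 : x/x0 ≤ 1 - (x0 - x) := by rw [h5]; linarith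
      calc x = (x/x0)*x0 := by field_simp
      _ ≤ (1-(x0-x))*x0 := by nlinarith
      _ ≤ Real.exp (-(x0-x))*x0 := by nlinarith
      _ = x0 * Real.exp (-(x0-x)) := by ring
    calc x * Real.exp (1-x) ≤ (x0 * Real.exp (-(x0-x))) * Real.exp (1-x) := by
          exact mul_le_mul_of_nonneg_right h1 (Real.exp_pos _).le
    _ = x0 * (Real.exp (-(x0-x)) * Real.exp (1-x)) := by ring
    _ = x0 * Real.exp (1-x0) := by
        rw [← Real.exp_add]
        congr 2
        ring

lemma te_lt_one {t : ℝ} (ht1 : t < 1) : t * Real.exp (1 - t) < 1 := by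
  have hne : t - 1 ≠ 0 := by intro h; apply absurd ht1; linarith [sub_eq_zero.mp h]
  have h := Real.add_one_lt_exp hne
  have h2 : t < Real.exp (t - 1) := by linarith
  have h3 : Real.exp (t-1) * Real.exp (1-t) = 1 := by
    rw [← Real.exp_add]; ring_nf; exact Real.exp_zero
  nlinarith [Real.exp_pos (1-t)]

lemma jb_tail_bound (hβ0 : 0 ≤ β) (hβ1 : β < 1) (hα : 0 < α) (m : ℕ)
    (hm : 1 ≤ m) (h2 : 2*α ≤ (1-β)*(m:ℝ)) :
    jb β α m ≤ (((1+β)/2) * Real.exp (1 - (1+β)/2))^m := by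
  have hmR : (1:ℝ) ≤ (m:ℝ) := by exact_mod_cast hm
  have hm0 : (0:ℝ) < (m:ℝ) := by linarith
  have hlam0 : (0:ℝ) < α + β*(m:ℝ) := lam_pos hβ0 hα m
  set lam : ℝ := α + β*(m:ℝ) with hlam
  set x : ℝ := lam/(m:ℝ) with hx
  have hx0 : 0 ≤ x := by positivity
  have hxx0 : x ≤ (1+β)/2 := by
    rw [hx, div_le_iff₀ hm0]
    rw [hlam]
    nlinarith
  have hx01 : (1+β)/2 ≤ 1 := by linarith
  have hfm : (0:ℝ) < (Nat.factorial m : ℝ) := by exact_mod_cast m.factorial_pos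
  have hmm : (0:ℝ) < (m:ℝ)^m := by positivity
  have key : jb β α m ≤ (x * Real.exp (1-x))^m := by
    unfold jb
    rw [← hlam]
    have hfact := fact_ub m
    have h5 : lam^m / (Nat.factorial m : ℝ) ≤ lam^m * Real.exp 1 ^ m / (m:ℝ)^m := by
      rw [div_le_div_iff₀ hfm hmm]
      have hlp : (0:ℝ) ≤ lam^m := by positivity
      calc lam^m * (m:ℝ)^m ≤ lam^m * ((Nat.factorial m : ℝ) * Real.exp 1 ^ m) := by
            exact mul_le_mul_of_nonneg_left hfact hlp
      _ = lam^m * Real.exp 1 ^m * (Nat.factorial m : ℝ) := by ring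
    have h6 : Real.exp (1-x) ^ m = Real.exp 1 ^ m * Real.exp (-lam) := by
      rw [← Real.exp_nat_mul, ← Real.exp_nat_mul, ← Real.exp_add]
      congr 1
      rw [hx]
      field_simp
      ring
    calc lam^m / (Nat.factorial m : ℝ) * Real.exp (-lam)
        ≤ (lam^m * Real.exp 1 ^ m / (m:ℝ)^m) * Real.exp (-lam) := by
          exact mul_le_mul_of_nonneg_right h5 (Real.exp_pos _).le
    _ = (x * Real.exp (1-x))^m := by
        rw [mul_pow, h6, hx, div_pow]
        ring
  calc jb β α m ≤ (x * Real.exp (1-x))^m := key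
  _ ≤ (((1+β)/2) * Real.exp (1 - (1+β)/2))^m := by
      apply pow_le_pow_left₀ (by positivity)
      exact xe_mono hx0 hxx0 hx01

lemma jUB (hβ0 : 0 ≤ β) (hβ1 : β < 1) (hα : 0 < α) :
    ∑' k, jb β α k ≤ 2/(1-β)*α + (2 + (1 - ((1+β)/2) * Real.exp (1 - (1+β)/2))⁻¹) := by
  have h1β : (0:ℝ) < 1 - β := by linarith
  set q : ℝ := ((1+β)/2) * Real.exp (1 - (1+β)/2) with hq
  have hq0 : 0 ≤ q := by positivity
  have hq1 : q < 1 := te_lt_one (by linarith)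
  set K : ℕ := ⌈2*α/(1-β)⌉₊ + 1 with hK
  have hKge : 2*α/(1-β) ≤ (K:ℝ) := by
    calc 2*α/(1-β) ≤ (⌈2*α/(1-β)⌉₊ : ℝ) := Nat.le_ceil _
    _ ≤ K := by rw [hK]; push_cast; linarith
  have hKle : (K:ℝ) ≤ 2*α/(1-β) + 2 := by
    rw [hK]; push_cast
    have := Nat.ceil_lt_add_one (by positivity : (0:ℝ) ≤ 2*α/(1-β))
    linarith
  have hsum := jb_summable hβ0 hβ1 hα
  rw [← Summable.sum_add_tsum_nat_add K hsum]
  have hhead : ∑ i ∈ Finset.range K, jb β α i ≤ (K:ℝ) := by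
    calc ∑ i ∈ Finset.range K, jb β α i ≤ ∑ i ∈ Finset.range K, 1 :=
          Finset.sum_le_sum (fun i _ => jb_le_one hβ0 hα i)
    _ = (K:ℝ) := by simp
  have htail : ∑' i, jb β α (i + K) ≤ (1-q)⁻¹ := by
    have hterm : ∀ i : ℕ, jb β α (i+K) ≤ q^i := by
      intro i
      have hiK : 1 ≤ i + K := by omega
      have hcast : (K:ℝ) ≤ ((i+K : ℕ):ℝ) := by
        push_cast
        linarith [Nat.cast_nonneg (α := ℝ) i]
      have h2 : 2*α ≤ (1-β)*((i+K : ℕ):ℝ) := by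
        have h3 : 2*α ≤ (1-β)*(K:ℝ) := by
          rw [div_le_iff₀ h1β] at hKge
          linarith
        nlinarith
      calc jb β α (i+K) ≤ q^(i+K) := jb_tail_bound hβ0 hβ1 hα (i+K) hiK h2
      _ ≤ q^i := by
          rw [pow_add]
          have h4 : q^K ≤ 1 := pow_le_one₀ hq0 hq1.le
          have h5 : (0:ℝ) ≤ q^i := by positivity
          nlinarith
    calc ∑' i, jb β α (i+K) ≤ ∑' i, q^i := by
          apply Summable.tsum_le_tsum hterm ((summable_nat_add_iff K).mpr hsum)
          exact summable_geometric_of_lt_one hq0 hq1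
    _ = (1-q)⁻¹ := tsum_geometric_of_lt_one hq0 hq1
  have hKle2 : 2*α/(1-β) = 2/(1-β)*α := by ring
  linarith

set_option maxHeartbeats 1000000 in
lemma jLB (hβ0 : 0 ≤ β) (hβ1 : β < 1) (hα : 1 ≤ α) :
    (1-β)^2 / (2 * Real.exp 2) / α ≤ ∑' j, ja β α j := by
  have hα0 : (0:ℝ) < α := by linarith
  have h1β : (0:ℝ) < 1 - β := by linarith
  have hE : (0:ℝ) < Real.exp 1 := Real.exp_pos 1
  set k : ℕ := ⌊α/(1-β)⌋₊ with hk
  have hge1 : (1:ℝ) ≤ α/(1-β) := by rw [le_div_iff₀ h1β]; nlinarith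
  have hk1 : 1 ≤ k := Nat.le_floor (by exact_mod_cast hge1)
  have hkR1 : (1:ℝ) ≤ (k:ℝ) := by exact_mod_cast hk1
  have hkR0 : (0:ℝ) < (k:ℝ) := by linarith
  have hkle : (k:ℝ) ≤ α/(1-β) := Nat.floor_le (by positivity)
  have hklt : α/(1-β) < (k:ℝ)+1 := Nat.lt_floor_add_one _
  have hkub : (1-β)*(k:ℝ) ≤ α := by
    rw [le_div_iff₀ h1β] at hkle
    nlinarith [hkle]
  have hkub2 : α < (1-β)*((k:ℝ)+1) := by
    rw [div_lt_iff₀ h1β] at hklt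
    nlinarith [hklt]
  set δ : ℝ := α - (1-β)*(k:ℝ) with hδ
  have hδ0 : 0 ≤ δ := by rw [hδ]; linarith
  have hδ1 : δ ≤ 1 := by rw [hδ]; nlinarith
  set lam : ℝ := α + β*(k:ℝ) with hlam
  have hlamk : lam = (k:ℝ) + δ := by rw [hlam, hδ]; ring
  have hlam0 : (0:ℝ) < lam := lam_pos hβ0 hα0 k
  have hfk : (0:ℝ) < (Nat.factorial k : ℝ) := by exact_mod_cast k.factorial_pos
  -- power lower bound
  have hpow : (k:ℝ)^k * Real.exp (δ - δ^2/(k:ℝ)) ≤ lam^k := by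
    set u : ℝ := δ/(k:ℝ) with hu
    have hu0 : 0 ≤ u := by positivity
    have h1 : Real.exp (u - u^2) ≤ 1 + u := exp_sub_sq_le hu0
    have h2 : Real.exp (u - u^2)^k ≤ (1+u)^k :=
      pow_le_pow_left₀ (Real.exp_pos _).le h1 _
    have h3 : Real.exp (u - u^2)^k = Real.exp (δ - δ^2/(k:ℝ)) := by
      rw [← Real.exp_nat_mul]
      congr 1
      rw [hu]; field_simp
    have h4 : (k:ℝ)^k * (1+u)^k = lam^k := by
      rw [← mul_pow]
      congr 1
      rw [hu, hlamk]; field_simp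
    calc (k:ℝ)^k * Real.exp (δ - δ^2/(k:ℝ)) = (k:ℝ)^k * Real.exp (u-u^2)^k := by rw [h3]
    _ ≤ (k:ℝ)^k * (1+u)^k := by
        have h0 : (0:ℝ) ≤ (k:ℝ)^k := by positivity
        exact mul_le_mul_of_nonneg_left h2 h0
    _ = lam^k := h4
  -- lam^k * exp(-lam) lower bound
  have hP : (k:ℝ)^k * Real.exp (-1) * (Real.exp 1 ^ k)⁻¹ ≤ lam^k * Real.exp (-lam) := by
    have e6 : Real.exp (-(k:ℝ)) = (Real.exp 1 ^ k)⁻¹ := by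
      rw [← Real.exp_nat_mul, ← Real.exp_neg]
      congr 1; ring
    have h8 : δ^2/(k:ℝ) ≤ 1 := by
      rw [div_le_one hkR0]; nlinarith
    have e7 : Real.exp (-1:ℝ) ≤ Real.exp (-(δ^2/(k:ℝ))) := by
      apply Real.exp_le_exp.mpr; linarith
    have e5 : Real.exp (-(δ^2/(k:ℝ))) * Real.exp (-(k:ℝ))
        = Real.exp (δ - δ^2/(k:ℝ)) * Real.exp (-lam) := by
      rw [← Real.exp_add, ← Real.exp_add]
      congr 1
      rw [hlamk]; ring
    calc (k:ℝ)^k * Real.exp (-1) * (Real.exp 1 ^ k)⁻¹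
        = (k:ℝ)^k * (Real.exp (-1:ℝ) * Real.exp (-(k:ℝ))) := by rw [← e6]; ring
    _ ≤ (k:ℝ)^k * (Real.exp (-(δ^2/(k:ℝ))) * Real.exp (-(k:ℝ))) := by
        have h0 : (0:ℝ) ≤ (k:ℝ)^k := by positivity
        have h9 := mul_le_mul_of_nonneg_right e7 (Real.exp_pos (-(k:ℝ))).le
        exact mul_le_mul_of_nonneg_left h9 h0
    _ = ((k:ℝ)^k * Real.exp (δ - δ^2/(k:ℝ))) * Real.exp (-lam) := by rw [e5]; ring
    _ ≤ lam^k * Real.exp (-lam) :=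
        mul_le_mul_of_nonneg_right hpow (Real.exp_pos _).le
  -- numeric bound
  have hklam : (1-β)^2 * ((k:ℝ)*lam) ≤ 2*α^2 := by
    have h9 : (1-β)*lam ≤ 2*α := by
      rw [hlamk]
      nlinarith [mul_le_mul_of_nonneg_left hδ1 h1β.le, hkub, hα]
    have h10 : (0:ℝ) ≤ (1-β)*lam := by positivity
    have h11 := mul_le_mul hkub h9 h10 hα0.le
    nlinarith [h11]
  have hexp2 : Real.exp 2 = Real.exp 1 * Real.exp 1 := by
    rw [← Real.exp_add]; norm_num
  have hnum : ((1-β)^2/(2*Real.exp 2)) * Real.exp 1 * (k:ℝ) * lam ≤ α*α*Real.exp (-1) := by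
    have hc : ((1-β)^2/(2*Real.exp 2)) * Real.exp 1 * (k:ℝ) * lam
        = (1-β)^2/(2*Real.exp 1) * ((k:ℝ)*lam) := by
      rw [hexp2]; field_simp
    have ha2 : α*α*Real.exp (-1:ℝ) = α^2/Real.exp 1 := by
      rw [Real.exp_neg]
      rw [div_eq_mul_inv]
      ring
    rw [hc, ha2]
    rw [div_mul_eq_mul_div, div_le_div_iff₀ (by positivity) hE]
    nlinarith [hklam, hE]
  -- factorial bound
  have hfl' : (Nat.factorial k : ℝ) ≤ Real.exp 1 * (k:ℝ)^(k+1) * (Real.exp 1 ^ k)⁻¹ := by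
    have hEk : (0:ℝ) < Real.exp 1 ^ k := by positivity
    have h := (le_div_iff₀ hEk).mpr (fact_lb k hk1)
    rw [div_eq_mul_inv] at h
    exact h
  have N1 : lam^(k-1) * lam = lam^k := by
    rw [← pow_succ]
    congr 1
    omega
  have hja_eq : ja β α k = α * lam^(k-1) * Real.exp (-lam) / (Nat.factorial k : ℝ) := by
    unfold ja
    rw [jW_eq α β k hk1]
    rw [show α + (k:ℝ)*β = lam from by rw [hlam]; ring]
    rw [show α + β*(k:ℝ) = lam from by rw [hlam]]
    ring
  have T2 : ((1-β)^2/(2*Real.exp 2) * (Nat.factorial k : ℝ)) * lam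
      ≤ (α * lam^(k-1) * Real.exp (-lam) * α) * lam := by
    have hc0 : (0:ℝ) ≤ (1-β)^2/(2*Real.exp 2) := by positivity
    calc ((1-β)^2/(2*Real.exp 2) * (Nat.factorial k : ℝ)) * lam
        ≤ ((1-β)^2/(2*Real.exp 2) * (Real.exp 1 * (k:ℝ)^(k+1) * (Real.exp 1 ^ k)⁻¹)) * lam := by
          have h10 := mul_le_mul_of_nonneg_left hfl' hc0
          exact mul_le_mul_of_nonneg_right h10 hlam0.le
    _ = ((1-β)^2/(2*Real.exp 2) * Real.exp 1 * (k:ℝ) * lam) * ((k:ℝ)^k * (Real.exp 1 ^ k)⁻¹) := by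
          rw [pow_succ]
          ring
    _ ≤ (α*α*Real.exp (-1)) * ((k:ℝ)^k * (Real.exp 1 ^ k)⁻¹) := by
          have h0 : (0:ℝ) ≤ (k:ℝ)^k * (Real.exp 1 ^ k)⁻¹ := by positivity
          exact mul_le_mul_of_nonneg_right hnum h0
    _ = α*α*((k:ℝ)^k * Real.exp (-1) * (Real.exp 1 ^ k)⁻¹) := by ring
    _ ≤ α*α*(lam^k * Real.exp (-lam)) := by
          have h0 : (0:ℝ) ≤ α*α := by positivity
          exact mul_le_mul_of_nonneg_left hP h0
    _ = (α * lam^(k-1) * Real.exp (-lam) * α) * lam := by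
          rw [← N1]; ring
  have T1 : (1-β)^2/(2*Real.exp 2)/α ≤ ja β α k := by
    rw [hja_eq, div_le_div_iff₀ hα0 hfk]
    exact le_of_mul_le_mul_right T2 hlam0
  calc (1-β)^2/(2*Real.exp 2)/α ≤ ja β α k := T1
  _ ≤ ∑' j, ja β α j := Summable.le_tsum (ja_summable hβ0 hβ1 hα0) k (fun j _ => ja_nonneg hβ0 hα0 j)

lemma endgame_contra {M D P I q a : ℝ}
    (h7 : M*(2*q*a + (2+I) + 1) < M*(M*D^2))
    (ht2m : (M*D)^2 ≤ P)
    (hup : P ≤ q*(2*M*a) + (2+I))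
    (h8 : 2+I ≤ M*(2+I))
    (hmpos : 0 < M) : False := by
  nlinarith [h7, ht2m, hup, h8, hmpos]

lemma v_pos (hβ0 : 0 ≤ β) (hβ1 : β < 1) (hα : 0 < α) : 0 < ∑' k, jb β α k :=
  Summable.tsum_pos (jb_summable hβ0 hβ1 hα) (fun k => (jb_pos hβ0 hα k).le) 0 (jb_pos hβ0 hα 0)

lemma u_pos (hβ0 : 0 ≤ β) (hβ1 : β < 1) (hα : 0 < α) : 0 < ∑' k, ja β α k :=
  Summable.tsum_pos (ja_summable hβ0 hβ1 hα) (fun k => ja_nonneg hβ0 hα k) 0 (ja_zero_pos hβ0 hα)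

lemma u_le_v (hβ0 : 0 ≤ β) (hβ1 : β < 1) (hα : 0 < α) :
    ∑' k, ja β α k ≤ ∑' k, jb β α k :=
  Summable.tsum_le_tsum (ja_le_jb hβ0 hα) (ja_summable hβ0 hβ1 hα) (jb_summable hβ0 hβ1 hα)

lemma u_mult (hβ0 : 0 ≤ β) (hβ1 : β < 1) {γ : ℝ} (hα : 0 < α) (hγ : 0 < γ) :
    (∑' k, ja β α k) * (∑' k, ja β γ k) = ∑' k, ja β (α+γ) k := by
  have e1 := jE1 hβ0 hβ1 hγ one_pos
  have e2 := jE1 hβ0 hβ1 hα (by linarith : (0:ℝ) < γ + 1)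
  have e3 := jE1 hβ0 hβ1 (by linarith : (0:ℝ) < α + γ) one_pos
  have hv1 : 0 < ∑' k, jb β 1 k := v_pos hβ0 hβ1 one_pos
  rw [show α + (γ+1) = (α+γ)+1 from by ring] at e2
  apply mul_right_cancel₀ (ne_of_gt hv1)
  calc (∑' k, ja β α k) * (∑' k, ja β γ k) * (∑' k, jb β 1 k)
      = (∑' k, ja β α k) * ((∑' k, ja β γ k) * (∑' k, jb β 1 k)) := by ring
  _ = (∑' k, ja β α k) * (∑' k, jb β (γ+1) k) := by rw [e1]
  _ = ∑' k, jb β ((α+γ)+1) k := e2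
  _ = (∑' k, ja β (α+γ) k) * (∑' k, jb β 1 k) := e3.symm

lemma u_pow (hβ0 : 0 ≤ β) (hβ1 : β < 1) (hα : 0 < α) :
    ∀ n : ℕ, (∑' k, ja β α k)^(n+1) = ∑' k, ja β (((n+1:ℕ):ℝ)*α) k := by
  intro n
  induction n with
  | zero =>
    rw [pow_one]
    norm_num
  | succ n ih =>
    have hpos : (0:ℝ) < ((n+1:ℕ):ℝ)*α := by positivity
    calc (∑' k, ja β α k)^(n+1+1)
        = (∑' k, ja β (((n+1:ℕ):ℝ)*α) k) * (∑' k, ja β α k) := by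
          rw [← ih, ← pow_succ]
    _ = ∑' k, ja β (((n+1:ℕ):ℝ)*α + α) k := u_mult hβ0 hβ1 hpos hα
    _ = ∑' k, ja β (((n+1+1:ℕ):ℝ)*α) k := by
          rw [show ((n+1:ℕ):ℝ)*α + α = ((n+1+1:ℕ):ℝ)*α from by push_cast; ring]

set_option maxHeartbeats 1000000 in
lemma u_eq_one (hβ0 : 0 ≤ β) (hβ1 : β < 1) (hα : 0 < α) :
    ∑' k, ja β α k = 1 := by
  have h1β : (0:ℝ) < 1 - β := by linarith
  set t : ℝ := ∑' k, ja β α k with ht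
  have ht0 : 0 < t := u_pos hβ0 hβ1 hα
  have hupow : ∀ m : ℕ, 1 ≤ m → t^m = ∑' k, ja β ((m:ℝ)*α) k := by
    intro m hm
    obtain ⟨n, rfl⟩ : ∃ n, m = n + 1 := ⟨m-1, by omega⟩
    exact_mod_cast u_pow hβ0 hβ1 hα n
  rcases lt_trichotomy t 1 with hlt | heq | hgt
  · exfalso
    set s : ℝ := (1-t)/t with hs
    have hs0 : 0 < s := div_pos (by linarith) ht0
    have hts : t * (1+s) = 1 := by rw [hs]; field_simp; ring
    have hc0 : (0:ℝ) < (1-β)^2/(2*Real.exp 2) := by positivity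
    obtain ⟨m, hm⟩ := exists_nat_gt (max (2*α/((1-β)^2/(2*Real.exp 2)*s^2)) (1/α))
    have hm1 : 2*α/((1-β)^2/(2*Real.exp 2)*s^2) < (m:ℝ) := lt_of_le_of_lt (le_max_left _ _) hm
    have hm2 : 1/α < (m:ℝ) := lt_of_le_of_lt (le_max_right _ _) hm
    have hmpos : (0:ℝ) < m := lt_trans (by positivity) hm2
    have hm0 : 1 ≤ m := by exact_mod_cast Nat.cast_pos.mp hmpos
    have hαm : (1:ℝ) ≤ ((2*m:ℕ):ℝ)*α := by
      push_cast
      rw [div_lt_iff₀ hα] at hm2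
      nlinarith
    have hLB := jLB hβ0 hβ1 hαm
    have hpow2 : t^(2*m) = ∑' k, ja β (((2*m:ℕ):ℝ)*α) k := hupow (2*m) (by omega)
    rw [← hpow2] at hLB
    -- upper bound on t^(2m)
    have h1s : 1 + (m:ℝ)*s ≤ (1+s)^m := one_add_mul_le_pow (by linarith) m
    have hms0 : (0:ℝ) < (m:ℝ)*s := by positivity
    have hpows : (0:ℝ) < (1+s)^m := by positivity
    have htm : t^m * (1+s)^m = 1 := by rw [← mul_pow, hts, one_pow]
    have h3 : t^m = 1/(1+s)^m := by rw [eq_div_iff (ne_of_gt hpows)]; exact htm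
    have htmle : t^m ≤ 1/((m:ℝ)*s) := by
      rw [h3]
      apply one_div_le_one_div_of_le hms0
      linarith
    have ht2m : t^(2*m) ≤ (1/((m:ℝ)*s))^2 := by
      rw [mul_comm 2 m, pow_mul]
      exact pow_le_pow_left₀ (pow_nonneg ht0.le m) htmle 2
    have hfin : (1-β)^2/(2*Real.exp 2) / (((2*m:ℕ):ℝ)*α) ≤ 1/((m:ℝ)^2*s^2) := by
      calc (1-β)^2/(2*Real.exp 2) / (((2*m:ℕ):ℝ)*α) ≤ t^(2*m) := hLB
      _ ≤ (1/((m:ℝ)*s))^2 := ht2m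
      _ = 1/((m:ℝ)^2*s^2) := by rw [div_pow, one_pow, mul_pow]
    have harg : (0:ℝ) < ((2*m:ℕ):ℝ)*α := by positivity
    rw [div_le_div_iff₀ harg (by positivity)] at hfin
    -- hfin : c * (m^2*s^2) ≤ 1 * ((2m)*α)
    rw [div_lt_iff₀ (by positivity)] at hm1
    -- hm1 : 2*α < m * (c*s^2)
    push_cast at hfin
    nlinarith [hfin, hm1, hmpos, hc0, hs0]
  · exact heq
  · exfalso
    set d : ℝ := t - 1 with hd
    have hd0 : 0 < d := by linarith
    have hq1 : ((1+β)/2) * Real.exp (1 - (1+β)/2) < 1 := te_lt_one (by linarith)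
    have hB0 : (0:ℝ) < 2 + (1 - ((1+β)/2) * Real.exp (1 - (1+β)/2))⁻¹ := by
      have h6 : (0:ℝ) < 1 - ((1+β)/2) * Real.exp (1 - (1+β)/2) := by linarith
      positivity
    obtain ⟨m, hm⟩ := exists_nat_gt (max
      ((2*(2/(1-β))*α + (2 + (1 - ((1+β)/2) * Real.exp (1 - (1+β)/2))⁻¹) + 1)/d^2) 1)
    have hm1 : (2*(2/(1-β))*α + (2 + (1 - ((1+β)/2) * Real.exp (1 - (1+β)/2))⁻¹) + 1)/d^2 < (m:ℝ) :=
      lt_of_le_of_lt (le_max_left _ _) hm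
    have hm2 : (1:ℝ) < (m:ℝ) := lt_of_le_of_lt (le_max_right _ _) hm
    have hmpos : (0:ℝ) < m := by linarith
    have hm0 : 1 ≤ m := by exact_mod_cast Nat.cast_pos.mp hmpos
    have hαm : (0:ℝ) < ((2*m:ℕ):ℝ)*α := by positivity
    have hUB := jUB hβ0 hβ1 hαm
    have hle := u_le_v hβ0 hβ1 hαm
    have hpow2 : t^(2*m) = ∑' k, ja β (((2*m:ℕ):ℝ)*α) k := hupow (2*m) (by omega)
    have hup : t^(2*m) ≤ 2/(1-β)*(((2*m:ℕ):ℝ)*α) + (2 + (1 - ((1+β)/2) * Real.exp (1 - (1+β)/2))⁻¹) := by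
      rw [hpow2]
      exact le_trans hle hUB
    have h1d : 1 + (m:ℝ)*d ≤ (1+d)^m := one_add_mul_le_pow (by linarith) m
    have ht2m : ((m:ℝ)*d)^2 ≤ t^(2*m) := by
      rw [mul_comm 2 m, pow_mul]
      have htd : t = 1 + d := by rw [hd]; ring
      have h5 : (m:ℝ)*d ≤ t^m := by
        rw [htd]
        nlinarith [h1d]
      exact pow_le_pow_left₀ (by positivity) h5 2
    rw [div_lt_iff₀ (by positivity)] at hm1
    push_cast at hup
    have h7 := mul_lt_mul_of_pos_left hm1 hmpos
    have h8 : (2 + (1 - ((1+β)/2) * Real.exp (1 - (1+β)/2))⁻¹)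
        ≤ (m:ℝ) * (2 + (1 - ((1+β)/2) * Real.exp (1 - (1+β)/2))⁻¹) :=
      le_mul_of_one_le_left hB0.le hm2.le
    exact endgame_contra h7 ht2m hup h8 hmpos

lemma v_eq (hβ0 : 0 ≤ β) (hβ1 : β < 1) (hα : 0 < α) :
    ∑' k, jb β α k = 1/(1-β) := by
  have hE2 := jE2 hβ0 hβ1 hα
  rw [u_eq_one hβ0 hβ1 hα] at hE2
  rcases eq_or_lt_of_le hβ0 with hb0 | hb0
  · subst hb0
    norm_num at hE2 ⊢
    exact hE2
  · have hvs := jE1 hβ0 hβ1 hb0 hα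
    rw [u_eq_one hβ0 hβ1 hb0, one_mul] at hvs
    rw [show α + β = β + α from by ring, ← hvs] at hE2
    have h1β : (0:ℝ) < 1-β := by linarith
    field_simp
    linear_combination (1:ℝ) * hE2

end Jain

theorem jain_S1 (α β : ℝ) (hα : 0 < α) (hβ0 : 0 ≤ β) (hβ1 : β < 1) :
    HasSum (fun k : ℕ =>
      (α + β * k) ^ (k : ℕ) / (Nat.factorial k) * Real.exp (-(α + β * k)))
      (1 / (1 - β)) := by
  have hs : Summable (Jain.jb β α) := Jain.jb_summable hβ0 hβ1 hα
  have hv : ∑' k, Jain.jb β α k = 1/(1-β) := Jain.v_eq hβ0 hβ1 hα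
  have hh := hs.hasSum
  rw [hv] at hh
  exact hh
end
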